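/- arXiv:2112.05725 — 6 statements merged into one kernel-verified Lean document; each statement's English description precedes it below -/
import Mathlib

section
/- Let S be a string over a finite alphabet Σ in which every letter of Σ appears at most 3 times. If S has a full-appearance LD-subsequence, then S has a full-appearance LD-subsequence in which every LD-block has length exactly 2. -/
/-- `IsBlockDecomp bs l` says that `bs = [(x₁,d₁),…,(x_k,d_k)]` is a decomposition of `l`
as an LD-string `x₁^{d₁} x₂^{d₂} ⋯ x_k^{d_k}` with `k ≥ 1`, adjacent letters distinct
(`x_j ≠ x_{j+1}`) and all exponents `d_i ≥ 2`. -/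
def IsBlockDecomp {α : Type*} (bs : List (α × ℕ)) (l : List α) : Prop :=
  bs ≠ [] ∧ (∀ p ∈ bs, 2 ≤ p.2) ∧ List.Chain' (fun p q => p.1 ≠ q.1) bs ∧
    l = (bs.map fun p => List.replicate p.2 p.1).flatten

/-- `l` is a letter-duplicated string (LD-string). -/
def IsLDString {α : Type*} (l : List α) : Prop :=
  ∃ bs : List (α × ℕ), IsBlockDecomp bs l

/-- `l` is an LD-subsequence of `S`: a subsequence of `S` that is an LD-string. -/
def IsLDSubseq {α : Type*} (l S : List α) : Prop :=
  l.Sublist S ∧ IsLDString l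

lemma trunc_sublist {α : Type*} (bs : List (α × ℕ)) (hd : ∀ p ∈ bs, 2 ≤ p.2) :
    ((bs.map fun p => List.replicate 2 p.1).flatten).Sublist
      ((bs.map fun p => List.replicate p.2 p.1).flatten) := by
  induction bs with
  | nil => simp
  | cons p bs ih =>
    simp only [List.map_cons, List.flatten_cons]
    exact List.Sublist.append
      ((List.replicate_sublist_replicate p.1).2 (hd p List.mem_cons_self))
      (ih fun q hq => hd q (List.mem_cons_of_mem _ hq))

/-- If every letter of the (finite) alphabet appears at most 3 times in `S` and `S` has a
full-appearance LD-subsequence, then `S` has a full-appearance LD-subsequence all of whose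
LD-blocks have length exactly 2. -/
theorem stmt_2 {α : Type*} [Fintype α] [DecidableEq α] (S : List α)
    (hcount : ∀ a : α, S.count a ≤ 3)
    (hfeas : ∃ l : List α, IsLDSubseq l S ∧ ∀ a : α, a ∈ l) :
    ∃ (l : List α) (bs : List (α × ℕ)), l.Sublist S ∧ IsBlockDecomp bs l ∧
      (∀ p ∈ bs, p.2 = 2) ∧ ∀ a : α, a ∈ l := by
  obtain ⟨l, ⟨hsub, bs, hne, hd, hch, hl⟩, hall⟩ := hfeas
  refine ⟨(bs.map fun p => List.replicate 2 p.1).flatten, bs.map fun p => (p.1, 2),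
    ((trunc_sublist bs hd).trans (hl ▸ hsub)), ⟨?_, ?_, ?_, ?_⟩, ?_, ?_⟩
  · simpa using hne
  · intro p hp
    obtain ⟨q, _, rfl⟩ := List.mem_map.1 hp
    exact le_refl 2
  · refine (List.isChain_map _).2 ?_
    exact hch
  · rw [List.map_map]; rfl
  · intro p hp
    obtain ⟨q, _, rfl⟩ := List.mem_map.1 hp
    rfl
  · intro a
    have := hall a
    rw [hl, List.mem_flatten] at this
    obtain ⟨t, ht, hat⟩ := this
    obtain ⟨q, hq, rfl⟩ := List.mem_map.1 ht
    rw [List.eq_of_mem_replicate hat]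
    exact List.mem_flatten.2 ⟨List.replicate 2 q.1, List.mem_map_of_mem hq, by simp⟩
end

section
/- Let φ be an instance of (≤2,1,≤3)-SAT with clauses F₁, …, F_m and variables x₁, …, x_n, in which every variable is either a (1,1)-variable or a (2,1)-variable, and no clause contains both x_i and ¬x_i. Let S be the string constructed from φ as described below. Then φ is satisfiable if and only if S has a full-appearance LD-subsequence. -/
/-- Data of a variable in a `(≤2,1,≤3)`-SAT instance with clauses indexed by `Fin m`:
a `(1,1)`-variable `one j k` occurs positively in clause `F_j` and negatively in `F_k`;
a `(2,1)`-variable `two j k l` occurs positively in `F_j` and `F_k` and negatively in `F_l`. -/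
inductive VarInfo (m : ℕ) : Type
  | one (j k : Fin m) : VarInfo m
  | two (j k l : Fin m) : VarInfo m

/-- The list of (indices of) clauses in which a variable occurs. -/
def VarInfo.clauses {m : ℕ} : VarInfo m → List (Fin m)
  | .one j k => [j, k]
  | .two j k l => [j, k, l]

/-- `vi.satisfied c b`: assigning the Boolean value `b` to a variable with data `vi`
satisfies clause `F_c` (via one of the literals of this variable). -/
def VarInfo.satisfied {m : ℕ} (vi : VarInfo m) (c : Fin m) (b : Bool) : Prop :=
  match vi with
  | .one j k => (c = j ∧ b = true) ∨ (c = k ∧ b = false)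
  | .two j k l => ((c = j ∨ c = k) ∧ b = true) ∨ (c = l ∧ b = false)

/-- Whether a variable is a `(2,1)`-variable. -/
def VarInfo.isTwo {m : ℕ} : VarInfo m → Bool
  | .one _ _ => false
  | .two _ _ _ => true

/-- The gadget `L_i`: `F_j F_k F_k F_j` for a `(1,1)`-variable and
`F_j F_ℓ F_j F_k F_ℓ F_k` for a `(2,1)`-variable. -/
def VarInfo.Lblock {m : ℕ} : VarInfo m → List (Fin m)
  | .one j k => [j, k, k, j]
  | .two j k l => [j, l, j, k, l, k]

/-- The string `S = g₁g₁L₁ g₂g₂L₂ ⋯ g_n g_n L_n g_{n+1}g_{n+1}` over the alphabet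
`Σ = {F₁,…,F_m} ⊕ {g₁,…,g_{n+1}}`, built from the instance `v`. -/
def satString (m n : ℕ) (v : Fin n → VarInfo m) : List (Fin m ⊕ Fin (n + 1)) :=
  ((List.finRange n).map fun i =>
      Sum.inr i.castSucc :: Sum.inr i.castSucc :: (v i).Lblock.map Sum.inl).flatten
    ++ [Sum.inr (Fin.last n), Sum.inr (Fin.last n)]

/-- The number of literals of clause `F_c` in the instance `v`. -/
def numLit (m n : ℕ) (v : Fin n → VarInfo m) (c : Fin m) : ℕ :=
  ∑ i : Fin n, (v i).clauses.count c

/-- `τ` is a satisfying truth assignment for the instance `v`: every clause is satisfied. -/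
def SatAssignment (m n : ℕ) (v : Fin n → VarInfo m) (τ : Fin n → Bool) : Prop :=
  ∀ c : Fin m, ∃ i : Fin n, (v i).satisfied c (τ i)


namespace SatAux

variable {α β : Type*}

/-- In an LD string, every member occurs at least twice. -/
lemma ld_count [BEq α] [LawfulBEq α] {l : List α} (h : IsLDString l) {x : α} (hx : x ∈ l) :
    2 ≤ l.count x := by
  obtain ⟨bs, -, h2, -, rfl⟩ := h
  rw [List.mem_flatten] at hx
  obtain ⟨t, ht, hxt⟩ := hx
  rw [List.mem_map] at ht
  obtain ⟨p, hp, rfl⟩ := ht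
  have hx' : x = p.1 := List.eq_of_mem_replicate hxt
  rw [hx']
  calc 2 ≤ p.2 := h2 p hp
    _ = List.count p.1 (List.replicate p.2 p.1) := by simp
    _ ≤ _ := (List.sublist_flatten_of_mem
        (List.mem_map_of_mem (f := fun (p : α × ℕ) => List.replicate p.2 p.1) hp)).count_le p.1

lemma replicate_eq_append {d : ℕ} {x : α} {a c : List α} (h : List.replicate d x = a ++ c) :
    a = List.replicate a.length x ∧ c = List.replicate c.length x := by
  constructor
  · exact List.eq_replicate_of_mem fun b hb =>
      List.eq_of_mem_replicate (h ▸ List.mem_append_left c hb)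
  · exact List.eq_replicate_of_mem fun b hb =>
      List.eq_of_mem_replicate (h ▸ List.mem_append_right a hb)

/-- Key property: every element of the flatten of replicate-blocks (all of size ≥ 2)
equals its predecessor or its successor. -/
lemma flatten_rep_doubled : ∀ (bs : List (α × ℕ)), (∀ p ∈ bs, 2 ≤ p.2) →
    ∀ a y b, (bs.map fun p => List.replicate p.2 p.1).flatten = a ++ y :: b →
      a.getLast? = some y ∨ b.head? = some y := by
  intro bs
  induction bs with
  | nil => intro _ a y b h; simp at h
  | cons p bs ih =>
    intro hd a y b h
    simp only [List.map_cons, List.flatten_cons] at h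
    rcases List.append_eq_append_iff.mp h with ⟨a', ha, hb⟩ | ⟨c', hc, hrest⟩
    · rcases ih (fun q hq => hd q (List.mem_cons_of_mem _ hq)) a' y b hb with h1 | h1
      · left
        rw [ha, List.getLast?_append, h1]
        rfl
      · exact Or.inr h1
    · obtain ⟨hA, hC⟩ := replicate_eq_append hc
      rcases Nat.eq_zero_or_pos c'.length with hc0 | hcpos
      · have : c' = [] := List.length_eq_zero_iff.mp hc0
        subst this
        simp only [List.nil_append] at hrest
        rcases ih (fun q hq => hd q (List.mem_cons_of_mem _ hq)) [] y b hrest.symm with h1 | h1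
        · simp at h1
        · exact Or.inr h1
      · have hy : y = p.1 := by
          have : y ∈ c' := by
            cases c' with
            | nil => simp at hcpos
            | cons z zs =>
              simp only [List.cons_append, List.cons.injEq] at hrest
              simp [hrest.1]
          exact List.eq_of_mem_replicate (hC ▸ this)
        rcases Nat.eq_zero_or_pos a.length with ha0 | hapos
        · have ha' : a = [] := List.length_eq_zero_iff.mp ha0
          subst ha'
          right
          simp only [List.nil_append] at hc
          have h2 : 2 ≤ p.2 := hd p (List.mem_cons_self)
          obtain ⟨d', hp2⟩ : ∃ d', p.2 = d' + 2 := ⟨p.2 - 2, by omega⟩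
          rw [← hc, hp2, show d' + 2 = (d' + 1) + 1 from rfl, List.replicate_succ,
            List.replicate_succ] at hrest
          simp only [List.cons_append, List.cons.injEq] at hrest
          rw [hrest.2, hy]
          simp
        · left
          rw [hy, hA]
          obtain ⟨k, hk⟩ : ∃ k, a.length = k + 1 := ⟨a.length - 1, by omega⟩
          rw [hk, List.replicate_succ', List.getLast?_append]
          rfl

/-- Every element of an LD string equals its predecessor or its successor. -/
lemma ld_doubled {l : List α} (h : IsLDString l) {a : List α} {y : α} {b : List α}
    (hl : l = a ++ y :: b) : a.getLast? = some y ∨ b.head? = some y := by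
  obtain ⟨bs, -, h2, -, rfl⟩ := h
  exact flatten_rep_doubled bs h2 a y b hl

/-- Local version of the doubling property. -/
def AllDoubled (t : List α) : Prop :=
  ∀ a y b, t = a ++ y :: b → a.getLast? = some y ∨ b.head? = some y

lemma allDoubled_of_sandwich {l P t Q : List α} (h : IsLDString l)
    (hl : l = P ++ t ++ Q)
    (hP : ∀ y ∈ t, P.getLast? ≠ some y) (hQ : ∀ y ∈ t, Q.head? ≠ some y) :
    AllDoubled t := by
  intro a y b hsplit
  have hy : y ∈ t := by rw [hsplit]; simp
  have hl' : l = (P ++ a) ++ y :: (b ++ Q) := by rw [hl, hsplit]; simp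
  rcases ld_doubled h hl' with h1 | h1
  · rw [List.getLast?_append] at h1
    cases a with
    | nil => exact absurd (by simpa using h1) (hP y hy)
    | cons z zs =>
      left
      obtain ⟨w, hw⟩ := Option.isSome_iff_exists.mp
        (List.getLast?_isSome.mpr (List.cons_ne_nil z zs))
      rw [hw] at h1
      simp only [Option.or] at h1
      rw [hw]
      exact h1
  · rw [List.head?_append] at h1
    cases b with
    | nil => exact absurd (by simpa using h1) (hQ y hy)
    | cons z zs =>
      right
      rw [List.head?_cons] at h1
      simp only [Option.or] at h1
      exact h1

end SatAux

namespace SatAux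
variable {α β : Type*}

def ok2 [DecidableEq α] : Option α → List α → Bool
  | _, [] => true
  | prev, x :: xs => (decide (prev = some x) || decide (xs.head? = some x)) && ok2 (some x) xs

lemma allDoubled_ok2 [DecidableEq α] :
    ∀ (t pre : List α), AllDoubled (pre ++ t) → ok2 pre.getLast? t = true := by
  intro t
  induction t with
  | nil => intro _ _; rfl
  | cons x xs ih =>
    intro pre h
    rw [ok2, Bool.and_eq_true]
    constructor
    · rcases h pre x xs rfl with h1 | h1 <;> simp [h1]
    · have h2 : AllDoubled ((pre ++ [x]) ++ xs) := by
        rwa [List.append_assoc, List.singleton_append]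
      have := ih (pre ++ [x]) h2
      rwa [List.getLast?_append, List.getLast?_singleton] at this
      
lemma allDoubled_map (f : α → β) {t : List α} (h : AllDoubled t) :
    AllDoubled (t.map f) := by
  intro a y b hsplit
  obtain ⟨a', t', rfl, rfl, h2⟩ := List.map_eq_append_iff.mp hsplit
  obtain ⟨y', b', rfl, rfl, rfl⟩ := List.map_eq_cons_iff.mp h2
  rcases h a' y' b' rfl with h1 | h1
  · left; rw [List.getLast?_map, h1]; rfl
  · right; rw [List.head?_map, h1]; rfl

lemma core1 : ∀ u ∈ ([0,1,1,0] : List (Fin 2)).sublists,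
    ok2 none u = true → ¬((0 : Fin 2) ∈ u ∧ (1 : Fin 2) ∈ u) := by decide

lemma core2 : ∀ u ∈ ([0,1,0,2,1,2] : List (Fin 3)).sublists,
    ok2 none u = true → (1 : Fin 3) ∈ u → (0 : Fin 3) ∉ u ∧ (2 : Fin 3) ∉ u := by decide

end SatAux

namespace SatAux
open List
variable {α : Type*} [DecidableEq α]

lemma gadget1 {j k : α} (hjk : j ≠ k) {t : List α} (ht : t <+ [j, k, k, j])
    (hAD : AllDoubled t) : ¬(j ∈ t ∧ k ∈ t) := by
  rintro ⟨hj, hk⟩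
  classical
  set f : α → Fin 2 := fun x => if x = j then 0 else 1 with hf
  have hmap : List.map f [j, k, k, j] = [0, 1, 1, 0] := by
    simp [hf, Ne.symm hjk]
  have hsub : t.map f <+ [0, 1, 1, 0] := hmap ▸ ht.map f
  have hok : ok2 none (t.map f) = true := by
    have := allDoubled_map f hAD
    have := allDoubled_ok2 (t.map f) [] this
    simpa using this
  refine core1 (t.map f) (List.mem_sublists.2 hsub) hok ⟨?_, ?_⟩
  · have := List.mem_map_of_mem (f := f) hj
    simpa [hf] using this
  · have := List.mem_map_of_mem (f := f) hk
    have hfk : f k = 1 := by simp [hf, Ne.symm hjk]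
    rwa [hfk] at this

lemma gadget2 {j k L : α} (hjk : j ≠ k) (hjL : j ≠ L) (hkL : k ≠ L)
    {t : List α} (ht : t <+ [j, L, j, k, L, k]) (hAD : AllDoubled t) (hL : L ∈ t) :
    j ∉ t ∧ k ∉ t := by
  classical
  set f : α → Fin 3 := fun x => if x = j then 0 else if x = L then 1 else 2 with hf
  have hfj : f j = 0 := by simp [hf]
  have hfL : f L = 1 := by simp [hf, Ne.symm hjL]
  have hfk : f k = 2 := by simp [hf, Ne.symm hjk, hkL]
  have hmap : List.map f [j, L, j, k, L, k] = [0, 1, 0, 2, 1, 2] := by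
    simp [hfj, hfL, hfk]
  have hsub : t.map f <+ [0, 1, 0, 2, 1, 2] := hmap ▸ ht.map f
  have hok : ok2 none (t.map f) = true := by
    have := allDoubled_map f hAD
    have := allDoubled_ok2 (t.map f) [] this
    simpa using this
  have h1 : (1 : Fin 3) ∈ t.map f := by
    have := List.mem_map_of_mem (f := f) hL; rwa [hfL] at this
  obtain ⟨h0, h2⟩ := core2 (t.map f) (List.mem_sublists.2 hsub) hok h1
  constructor
  · intro hjt
    exact h0 (by have := List.mem_map_of_mem (f := f) hjt; rwa [hfj] at this)
  · intro hkt
    exact h2 (by have := List.mem_map_of_mem (f := f) hkt; rwa [hfk] at this)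

end SatAux

namespace SatAux
open List

variable {m n : ℕ}

instance {α β} [BEq α] [LawfulBEq α] [BEq β] [LawfulBEq β] : LawfulBEq (α ⊕ β) where
  eq_of_beq {a b} h := by
    cases a with
    | inl x => cases b with
      | inl y => have h' : (x == y) = true := h; rw [eq_of_beq h']
      | inr y => exact absurd (id h : false = true) (by simp)
    | inr x => cases b with
      | inl y => exact absurd (id h : false = true) (by simp)
      | inr y => have h' : (x == y) = true := h; rw [eq_of_beq h']
  rfl {a} := by
    cases a with
    | inl x => exact (beq_self_eq_true x : (x == x) = true)
    | inr x => exact (beq_self_eq_true x : (x == x) = true)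

/-- One gadget segment of the SAT string. -/
def seg (v : Fin n → VarInfo m) (i : Fin n) : List (Fin m ⊕ Fin (n + 1)) :=
  Sum.inr i.castSucc :: Sum.inr i.castSucc :: ((v i).Lblock.map Sum.inl)

lemma satString_eq (v : Fin n → VarInfo m) :
    satString m n v = ((List.finRange n).map (seg v)).flatten
      ++ [Sum.inr (Fin.last n), Sum.inr (Fin.last n)] := rfl

lemma decomp (v : Fin n → VarInfo m) : ∀ (is : List (Fin n)) (l : List (Fin m ⊕ Fin (n + 1))),
    is.Nodup →
    l <+ (is.map (seg v)).flatten ++ [Sum.inr (Fin.last n), Sum.inr (Fin.last n)] →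
    (∀ i ∈ is, 2 ≤ l.count (Sum.inr i.castSucc)) →
    2 ≤ l.count (Sum.inr (Fin.last n)) →
    ∃ ts : List (Fin n × List (Fin m ⊕ Fin (n + 1))),
      (ts.map Prod.fst).Nodup ∧
      (∀ p ∈ ts, p.1 ∈ is) ∧
      (∀ x ∈ l, (∃ z, x = Sum.inr z) ∨ ∃ p ∈ ts, x ∈ p.2) ∧
      (∀ p ∈ ts, p.2 <+ ((v p.1).Lblock.map Sum.inl) ∧
        ∃ P Q, l = P ++ p.2 ++ Q ∧ (∃ z, P.getLast? = some (Sum.inr z)) ∧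
          (∃ z', Q.head? = some (Sum.inr z'))) ∧
      (∃ z, l.head? = some (Sum.inr z)) := by
  intro is
  induction is with
  | nil =>
    intro l _ hsub _ hgl
    have hlen2 : l.length = 2 := by
      have h1 : l.length ≤ 2 := by simpa using hsub.length_le
      have h2 : l.count (Sum.inr (Fin.last n)) ≤ l.length := List.count_le_length
      omega
    have hl : l = [Sum.inr (Fin.last n), Sum.inr (Fin.last n)] := by
      apply hsub.eq_of_length
      simpa using hlen2
    subst hl
    refine ⟨[], by simp, by simp, ?_, by simp, ⟨Fin.last n, rfl⟩⟩
    intro x hx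
    left
    rcases List.mem_pair.mp hx with h | h <;> exact ⟨Fin.last n, h⟩
  | cons i is ih =>
    intro l hnd hsub hcnt hgl
    rw [List.map_cons, List.flatten_cons, List.append_assoc] at hsub
    obtain ⟨l₁, l₂, rfl, h₁, h₂⟩ := List.sublist_append_iff.mp hsub
    have hnd' := (List.nodup_cons.mp hnd).2
    have hi_not : i ∉ is := (List.nodup_cons.mp hnd).1
    -- membership shape of the rest
    have hrest_mem : ∀ x ∈ (is.map (seg v)).flatten
        ++ [Sum.inr (Fin.last n), Sum.inr (Fin.last n)],
        (∃ j ∈ is, x = Sum.inr j.castSucc) ∨ (∃ c, x = Sum.inl c)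
          ∨ x = Sum.inr (Fin.last n) := by
      intro x hx
      rcases List.mem_append.mp hx with hx | hx
      · obtain ⟨u, hu, hxu⟩ := List.mem_flatten.mp hx
        obtain ⟨j, hj, rfl⟩ := List.mem_map.mp hu
        simp only [seg, List.mem_cons] at hxu
        rcases hxu with rfl | rfl | h
        · exact Or.inl ⟨j, hj, rfl⟩
        · exact Or.inl ⟨j, hj, rfl⟩
        · obtain ⟨c, _, rfl⟩ := List.mem_map.mp h
          exact Or.inr (Or.inl ⟨c, rfl⟩)
      · rcases List.mem_pair.mp hx with h | h <;> exact Or.inr (Or.inr h)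
    have hci_notl₂ : Sum.inr (i.castSucc : Fin (n + 1)) ∉ l₂ := by
      intro hmem
      rcases hrest_mem _ (h₂.subset hmem) with ⟨j, hj, heq⟩ | ⟨c, hc⟩ | heq
      · rw [Sum.inr.injEq, Fin.castSucc_inj] at heq
        exact hi_not (heq ▸ hj)
      · simp at hc
      · rw [Sum.inr.injEq] at heq
        exact (Fin.castSucc_lt_last i).ne heq
    have hcnt₁ : 2 ≤ l₁.count (Sum.inr (i.castSucc : Fin (n + 1))) := by
      have := hcnt i (List.mem_cons_self)
      rw [List.count_append, List.count_eq_zero.mpr hci_notl₂] at this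
      omega
    -- split l₁ into the g-pair and the rest
    have h₁' : l₁ <+ [Sum.inr (i.castSucc : Fin (n + 1)), Sum.inr i.castSucc]
        ++ ((v i).Lblock.map Sum.inl) := h₁
    obtain ⟨a, t, rfl, ha, htsub⟩ := List.sublist_append_iff.mp h₁'
    have hci_nott : Sum.inr (i.castSucc : Fin (n + 1)) ∉ t := by
      intro hmem
      obtain ⟨c, _, hc⟩ := List.mem_map.mp (htsub.subset hmem)
      simp at hc
    have hcnta : 2 ≤ a.count (Sum.inr (i.castSucc : Fin (n + 1))) := by
      rw [List.count_append, List.count_eq_zero.mpr hci_nott] at hcnt₁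
      omega
    have ha2 : a = [Sum.inr (i.castSucc : Fin (n + 1)), Sum.inr i.castSucc] := by
      apply ha.eq_of_length
      have hle : a.length ≤ 2 := by simpa using ha.length_le
      have := List.count_le_length (a := Sum.inr (i.castSucc : Fin (n + 1))) (l := a)
      simp only [List.length_cons, List.length_nil]
      omega
    subst ha2
    -- all members of t are inl
    have ht_inl : ∀ x ∈ t, ∃ c, x = Sum.inl c := by
      intro x hx
      obtain ⟨c, _, hc⟩ := List.mem_map.mp (htsub.subset hx)
      exact ⟨c, hc.symm⟩
    -- counts for the recursive call
    have hcount_l₁ : ∀ z : Fin (n + 1), z ≠ i.castSucc →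
        (([Sum.inr (i.castSucc : Fin (n+1)), Sum.inr i.castSucc] ++ t).count (Sum.inr z)) = 0 := by
      intro z hz
      rw [List.count_eq_zero]
      intro hmem
      rcases List.mem_append.mp hmem with h | h
      · rcases List.mem_pair.mp h with h | h <;>
          exact hz (by rw [Sum.inr.injEq] at h; exact h)
      · obtain ⟨c, hc⟩ := ht_inl _ h
        simp at hc
    obtain ⟨ts', hnd'', hmem_is', hcover', hts', z₂, hhead₂⟩ := ih l₂ hnd' h₂
      (fun j hj => by
        have hcnt' := hcnt j (List.mem_cons_of_mem _ hj)
        rw [List.count_append, hcount_l₁ j.castSucc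
          (fun h => hi_not (Fin.castSucc_inj.mp h ▸ hj))] at hcnt'
        omega)
      (by
        rw [List.count_append, hcount_l₁ (Fin.last n)
          (Ne.symm (Fin.castSucc_lt_last i).ne)] at hgl
        omega)
    refine ⟨(i, t) :: ts', ?_, ?_, ?_, ?_, ?_⟩
    · rw [List.map_cons, List.nodup_cons]
      refine ⟨fun hmem => ?_, hnd''⟩
      obtain ⟨p, hp, hp1⟩ := List.mem_map.mp hmem
      have := hmem_is' p hp
      rw [hp1] at this
      exact hi_not this
    · intro p hp
      rcases List.mem_cons.mp hp with rfl | hp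
      · exact List.mem_cons_self
      · exact List.mem_cons_of_mem _ (hmem_is' p hp)
    · intro x hx
      rcases List.mem_append.mp hx with hx | hx
      · rcases List.mem_append.mp hx with hx | hx
        · rcases List.mem_pair.mp hx with rfl | rfl <;> exact Or.inl ⟨_, rfl⟩
        · exact Or.inr ⟨(i, t), List.mem_cons_self, hx⟩
      · rcases hcover' x hx with h | ⟨p, hp, hxp⟩
        · exact Or.inl h
        · exact Or.inr ⟨p, List.mem_cons_of_mem _ hp, hxp⟩
    · intro p hp
      rcases List.mem_cons.mp hp with rfl | hp
      · refine ⟨htsub, [Sum.inr i.castSucc, Sum.inr i.castSucc], l₂, by simp, ⟨i.castSucc, rfl⟩,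
          ⟨z₂, hhead₂⟩⟩
      · obtain ⟨hsubp, P, Q, hPQ, ⟨z, hz⟩, hQ⟩ := hts' p hp
        refine ⟨hsubp, ([Sum.inr i.castSucc, Sum.inr i.castSucc] ++ t) ++ P, Q, by
          rw [hPQ]; simp, ⟨z, ?_⟩, hQ⟩
        have hPne : P ≠ [] := by rintro rfl; simp at hz
        rw [List.getLast?_append, hz]
        rfl
    · exact ⟨i.castSucc, rfl⟩

end SatAux

namespace SatAux
open List

variable {m n : ℕ}

/-- The negative-occurrence clause of a variable. -/
def negL : VarInfo m → Fin m
  | .one _ k => k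
  | .two _ _ L => L

lemma backward (v : Fin n → VarInfo m) (hnodup : ∀ i : Fin n, (v i).clauses.Nodup)
    {l : List (Fin m ⊕ Fin (n + 1))} (hsub : l <+ satString m n v)
    (hLD : IsLDString l) (hfull : ∀ a, a ∈ l) :
    ∃ τ : Fin n → Bool, SatAssignment m n v τ := by
  classical
  rw [satString_eq] at hsub
  obtain ⟨ts, hndts, hts_is, hcover, hts, -⟩ := decomp v (List.finRange n) l
    (List.nodup_finRange n) hsub
    (fun i _ => ld_count hLD (hfull _)) (ld_count hLD (hfull _))
  set τ : Fin n → Bool := fun i =>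
    !(ts.any fun q => decide (q.1 = i) && decide (Sum.inl (negL (v i)) ∈ q.2)) with hτ
  refine ⟨τ, fun c => ?_⟩
  rcases hcover _ (hfull (Sum.inl c)) with ⟨z, hz⟩ | ⟨p, hp, hcp⟩
  · exact absurd hz (by simp)
  obtain ⟨hsubp, P, Q, hPQ, ⟨z, hzP⟩, ⟨z', hzQ⟩⟩ := hts p hp
  have hp2inl : ∀ y ∈ p.2, ∃ c', y = Sum.inl c' := by
    intro y hy
    obtain ⟨c', _, hc'⟩ := List.mem_map.mp (hsubp.subset hy)
    exact ⟨c', hc'.symm⟩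
  have hAD : AllDoubled p.2 := by
    refine allDoubled_of_sandwich hLD hPQ (fun y hy heq => ?_) (fun y hy heq => ?_)
    · obtain ⟨c', rfl⟩ := hp2inl y hy
      rw [hzP] at heq
      simp at heq
    · obtain ⟨c', rfl⟩ := hp2inl y hy
      rw [hzQ] at heq
      simp at heq
  have huniq : ∀ q ∈ ts, q.1 = p.1 → q = p :=
    fun q hq hq1 => List.inj_on_of_nodup_map hndts hq hp hq1
  have hfalse : Sum.inl (negL (v p.1)) ∈ p.2 → τ p.1 = false := by
    intro hmem
    rw [hτ]
    simp only [Bool.not_eq_false']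
    rw [List.any_eq_true]
    exact ⟨p, hp, by simp [hmem]⟩
  have htrue : Sum.inl (negL (v p.1)) ∉ p.2 → τ p.1 = true := by
    intro hmem
    rw [hτ]
    simp only [Bool.not_eq_true']
    rw [List.any_eq_false]
    intro q hq
    simp only [Bool.and_eq_true, decide_eq_true_eq, not_and]
    intro hq1
    rw [huniq q hq hq1]
    exact hmem
  refine ⟨p.1, ?_⟩
  cases hv : v p.1 with
  | one j k =>
    have hjk : j ≠ k := by
      have := hnodup p.1
      rw [hv] at this
      simpa [VarInfo.clauses] using this
    rw [hv, VarInfo.Lblock] at hsubp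
    have hcjk : c = j ∨ c = k := by
      have := hsubp.subset hcp
      simp at this
      tauto
    have hgad := gadget1 (show (Sum.inl j : Fin m ⊕ Fin (n + 1)) ≠ Sum.inl k by simp [hjk])
      (t := p.2) (by simpa using hsubp) hAD
    rcases hcjk with rfl | rfl
    · -- c = j : positive occurrence
      have hknot : Sum.inl k ∉ p.2 := fun hk => hgad ⟨hcp, hk⟩
      exact Or.inl ⟨rfl, htrue (by rw [hv]; exact hknot)⟩
    · -- c = k : negative occurrence
      exact Or.inr ⟨rfl, hfalse (by rw [hv]; exact hcp)⟩
  | two j k L =>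
    have hnd := hnodup p.1
    rw [hv] at hnd
    simp only [VarInfo.clauses, List.nodup_cons, List.mem_cons, List.mem_singleton,
      List.nodup_nil, and_true, not_or] at hnd
    obtain ⟨⟨hjk, hjL⟩, hkL⟩ := hnd
    rw [hv, VarInfo.Lblock] at hsubp
    have hcjkL : c = j ∨ c = L ∨ c = k := by
      have := hsubp.subset hcp
      simp at this
      tauto
    have hgad := gadget2 (show (Sum.inl j : Fin m ⊕ Fin (n + 1)) ≠ Sum.inl k by simp [hjk])
      (show (Sum.inl j : Fin m ⊕ Fin (n + 1)) ≠ Sum.inl L by simp [hjL])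
      (show (Sum.inl k : Fin m ⊕ Fin (n + 1)) ≠ Sum.inl L by simp [hkL])
      (t := p.2) (by simpa using hsubp) hAD
    have hpos : c = j ∨ c = k → (VarInfo.two j k L).satisfied c (τ p.1) := by
      intro hcjk
      have hLnot : Sum.inl L ∉ p.2 := by
        intro hL
        rcases hcjk with rfl | rfl
        · exact (hgad hL).1 hcp
        · exact (hgad hL).2 hcp
      have := htrue (by rw [hv]; exact hLnot)
      exact Or.inl ⟨hcjk, this⟩
    rcases hcjkL with h | rfl | h
    · exact hpos (Or.inl h)
    · exact Or.inr ⟨rfl, hfalse (by rw [hv]; exact hcp)⟩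
    · exact hpos (Or.inr h)

end SatAux

namespace SatAux
open List

variable {m n : ℕ}

/-- Letters picked from the gadget of a variable, given its truth value. -/
def pieceL : VarInfo m → Bool → List (Fin m)
  | .one j _, true => [j]
  | .one _ k, false => [k]
  | .two j k _, true => [j, k]
  | .two _ _ L, false => [L]

/-- The block list contributed by one variable. -/
def segB (v : Fin n → VarInfo m) (τ : Fin n → Bool) (i : Fin n) :
    List ((Fin m ⊕ Fin (n + 1)) × ℕ) :=
  (Sum.inr i.castSucc, 2) :: (pieceL (v i) (τ i)).map (fun c => (Sum.inl c, 2))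

lemma flat_rep_flatMap {α β : Type*} (g : β → List (α × ℕ)) (is : List β) :
    (((is.flatMap g).map fun p => List.replicate p.2 p.1)).flatten
      = is.flatMap (fun i => (((g i).map fun p => List.replicate p.2 p.1)).flatten) := by
  induction is with
  | nil => simp
  | cons i is ih => simp [ih]

lemma expand_piece (P : List (Fin m)) :
    (((P.map (fun c => ((Sum.inl c : Fin m ⊕ Fin (n + 1)), 2))).map
        fun p => List.replicate p.2 p.1)).flatten
      = P.flatMap (fun c => [Sum.inl c, Sum.inl c]) := by
  induction P with
  | nil => simp
  | cons c P ih =>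
    simp only [List.map_cons, List.flatten_cons, List.flatMap_cons, ih]
    rfl

lemma expand_segB (v : Fin n → VarInfo m) (τ : Fin n → Bool) (i : Fin n) :
    (((segB v τ i).map fun p => List.replicate p.2 p.1)).flatten
      = Sum.inr i.castSucc :: Sum.inr i.castSucc ::
          (pieceL (v i) (τ i)).flatMap (fun c => [Sum.inl c, Sum.inl c]) := by
  simp only [segB, List.map_cons, List.flatten_cons, expand_piece]
  rfl

lemma flatMap_sublist {α β : Type*} (f g : β → List α) (is : List β)
    (h : ∀ i ∈ is, f i <+ g i) : is.flatMap f <+ is.flatMap g := by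
  induction is with
  | nil => simp
  | cons i is ih =>
    simp only [List.flatMap_cons]
    exact (h i (List.mem_cons_self)).append
      (ih fun j hj => h j (List.mem_cons_of_mem _ hj))

lemma piece_sublist (v : Fin n → VarInfo m) (τ : Fin n → Bool) (i : Fin n) :
    (pieceL (v i) (τ i)).flatMap (fun c => [(Sum.inl c : Fin m ⊕ Fin (n + 1)), Sum.inl c])
      <+ (v i).Lblock.map Sum.inl := by
  cases hv : v i with
  | one j k =>
    cases ht : τ i with
    | true =>
      show [Sum.inl j, Sum.inl j] <+ [Sum.inl j, Sum.inl k, Sum.inl k, Sum.inl j]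
      exact .cons₂ _ (.cons _ (.cons _ (.cons₂ _ .slnil)))
    | false =>
      show [Sum.inl k, Sum.inl k] <+ [Sum.inl j, Sum.inl k, Sum.inl k, Sum.inl j]
      exact .cons _ (.cons₂ _ (.cons₂ _ (.cons _ .slnil)))
  | two j k L =>
    cases ht : τ i with
    | true =>
      show [Sum.inl j, Sum.inl j, Sum.inl k, Sum.inl k]
        <+ [Sum.inl j, Sum.inl L, Sum.inl j, Sum.inl k, Sum.inl L, Sum.inl k]
      exact .cons₂ _ (.cons _ (.cons₂ _ (.cons₂ _ (.cons _ (.cons₂ _ .slnil)))))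
    | false =>
      show [Sum.inl L, Sum.inl L] <+ [Sum.inl j, Sum.inl L, Sum.inl j, Sum.inl k, Sum.inl L, Sum.inl k]
      exact .cons _ (.cons₂ _ (.cons _ (.cons _ (.cons₂ _ (.cons _ .slnil)))))

lemma headRest (v : Fin n → VarInfo m) (τ : Fin n → Bool) (is : List (Fin n)) :
    ∀ q, ((is.flatMap (segB v τ)) ++ [((Sum.inr (Fin.last n) : Fin m ⊕ Fin (n + 1)), 2)]).head?
        = some q → ∃ z, q.1 = Sum.inr z := by
  intro q hq
  cases is with
  | nil =>
    simp at hq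
    rw [← hq]
    exact ⟨Fin.last n, rfl⟩
  | cons i is =>
    simp only [List.flatMap_cons, segB, List.cons_append, List.head?_cons,
      Option.some.injEq] at hq
    rw [← hq]
    exact ⟨i.castSucc, rfl⟩

lemma chain_segB (v : Fin n → VarInfo m) (hnodup : ∀ i : Fin n, (v i).clauses.Nodup)
    (τ : Fin n → Bool) (i : Fin n) :
    List.Chain' (fun p q : (Fin m ⊕ Fin (n + 1)) × ℕ => p.1 ≠ q.1) (segB v τ i) := by
  cases hv : v i with
  | one j k => cases ht : τ i <;> simp [List.Chain', segB, pieceL, hv, ht]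
  | two j k L =>
    have hnd := hnodup i
    rw [hv] at hnd
    simp only [VarInfo.clauses, List.nodup_cons, List.mem_cons, List.mem_singleton,
      List.nodup_nil, and_true, not_or] at hnd
    cases ht : τ i <;> simp [List.Chain', segB, pieceL, hv, ht, hnd.1.1]

lemma lastSeg (v : Fin n → VarInfo m) (τ : Fin n → Bool) (i : Fin n) :
    ∀ q, (segB v τ i).getLast? = some q → ∃ c, q.1 = Sum.inl c := by
  intro q hq
  simp only [segB] at hq
  cases hv : v i with
  | one j k =>
    rw [hv] at hq
    cases ht : τ i <;> rw [ht] at hq <;> simp only [pieceL, List.map_cons, List.map_nil] at hq <;>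
      simp at hq <;> exact ⟨_, by rw [← hq]⟩
  | two j k L =>
    rw [hv] at hq
    cases ht : τ i <;> rw [ht] at hq <;> simp only [pieceL, List.map_cons, List.map_nil] at hq <;>
      simp at hq <;> exact ⟨_, by rw [← hq]⟩

end SatAux

namespace SatAux
open List

variable {m n : ℕ}

lemma chainAll (v : Fin n → VarInfo m) (hnodup : ∀ i : Fin n, (v i).clauses.Nodup)
    (τ : Fin n → Bool) : ∀ is : List (Fin n),
    List.Chain' (fun p q : (Fin m ⊕ Fin (n + 1)) × ℕ => p.1 ≠ q.1)
      (is.flatMap (segB v τ) ++ [(Sum.inr (Fin.last n), 2)]) := by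
  intro is
  induction is with
  | nil => simp [List.Chain']
  | cons i is ih =>
    rw [List.flatMap_cons, List.append_assoc]
    refine List.isChain_append.mpr ⟨chain_segB v hnodup τ i, ih, ?_⟩
    intro x hx y hy
    obtain ⟨c, hc⟩ := lastSeg v τ i x hx
    obtain ⟨z, hz⟩ := headRest v τ is y hy
    rw [hc, hz]
    simp

lemma forward (v : Fin n → VarInfo m) (hnodup : ∀ i : Fin n, (v i).clauses.Nodup)
    (τ : Fin n → Bool) (hsat : SatAssignment m n v τ) :
    ∃ l : List (Fin m ⊕ Fin (n + 1)), IsLDSubseq l (satString m n v) ∧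
      ∀ a : Fin m ⊕ Fin (n + 1), a ∈ l := by
  set bs := (List.finRange n).flatMap (segB v τ)
    ++ [((Sum.inr (Fin.last n) : Fin m ⊕ Fin (n + 1)), 2)] with hbs
  set l := (bs.map fun p => List.replicate p.2 p.1).flatten with hl
  have hexp : l = (List.finRange n).flatMap (fun i => Sum.inr i.castSucc :: Sum.inr i.castSucc ::
      (pieceL (v i) (τ i)).flatMap (fun c => [Sum.inl c, Sum.inl c]))
      ++ [Sum.inr (Fin.last n), Sum.inr (Fin.last n)] := by
    rw [hl, hbs, List.map_append, List.flatten_append, flat_rep_flatMap]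
    simp only [expand_segB]
    simp
  refine ⟨l, ⟨?_, bs, ?_, ?_, ?_, hl⟩, ?_⟩
  · -- sublist
    rw [hexp, satString_eq, ← List.flatMap_def]
    refine List.Sublist.append ?_ (List.Sublist.refl _)
    refine flatMap_sublist _ _ _ (fun i _ => ?_)
    show _ <+ seg v i
    exact List.Sublist.cons₂ _ (List.Sublist.cons₂ _ (piece_sublist v τ i))
  · simp [hbs]
  · -- exponents
    intro p hp
    rw [hbs] at hp
    rcases List.mem_append.mp hp with hp | hp
    · obtain ⟨i, _, hpi⟩ := List.mem_flatMap.mp hp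
      simp only [segB, List.mem_cons, List.mem_map] at hpi
      rcases hpi with rfl | ⟨c, _, rfl⟩ <;> simp
    · simp only [List.mem_singleton] at hp
      subst hp
      simp
  · rw [hbs]
    exact chainAll v hnodup τ (List.finRange n)
  · -- full appearance
    intro a
    rw [hexp]
    cases a with
    | inl c =>
      obtain ⟨i, hi⟩ := hsat c
      apply List.mem_append_left
      refine List.mem_flatMap.mpr ⟨i, List.mem_finRange i, ?_⟩
      apply List.mem_cons_of_mem
      apply List.mem_cons_of_mem
      have hcp : c ∈ pieceL (v i) (τ i) := by
        cases hv : v i with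
        | one j k =>
          rw [hv] at hi
          simp only [VarInfo.satisfied] at hi
          rcases hi with ⟨rfl, ht⟩ | ⟨rfl, ht⟩ <;> rw [ht] <;> simp [pieceL]
        | two j k L =>
          rw [hv] at hi
          simp only [VarInfo.satisfied] at hi
          rcases hi with ⟨hjk, ht⟩ | ⟨rfl, ht⟩
          · rcases hjk with rfl | rfl <;> rw [ht] <;> simp [pieceL]
          · rw [ht]; simp [pieceL]
      exact List.mem_flatMap.mpr ⟨c, hcp, by simp⟩
    | inr z =>
      induction z using Fin.lastCases with
      | last => apply List.mem_append_right; simp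
      | cast i =>
        apply List.mem_append_left
        exact List.mem_flatMap.mpr ⟨i, List.mem_finRange i, List.mem_cons_self⟩

end SatAux

/-- `φ` is satisfiable iff the constructed string `S` has a full-appearance
LD-subsequence. -/
theorem stmt_9 (m n : ℕ) (v : Fin n → VarInfo m)
    (hnodup : ∀ i : Fin n, (v i).clauses.Nodup)
    (hclause : ∀ c : Fin m, 2 ≤ numLit m n v c ∧ numLit m n v c ≤ 3) :
    (∃ τ : Fin n → Bool, SatAssignment m n v τ) ↔
      ∃ l : List (Fin m ⊕ Fin (n + 1)), IsLDSubseq l (satString m n v) ∧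
        ∀ a : Fin m ⊕ Fin (n + 1), a ∈ l := by
  constructor
  · rintro ⟨τ, hτ⟩
    exact SatAux.forward v hnodup τ hτ
  · rintro ⟨l, ⟨hsub, hLD⟩, hfull⟩
    exact SatAux.backward v hnodup hsub hLD hfull
end

section
/- Let φ be an instance of (≤2,1,≤3)-SAT with clauses F₁, …, F_m and variables x₁, …, x_n, in which every variable is either a (1,1)-variable or a (2,1)-variable, and no clause contains both x_i and ¬x_i. Let S be the string constructed from φ as described below, and let K ≥ 0 be an integer. Then S has a full-appearance LD-subsequence of length at least 4n + 2 + 2K if and only if φ has a satisfying truth assignment in which at least K of the (2,1)-variables are assigned True. (For a satisfying assignment with K₁ (2,1)-variables True, K₂ (2,1)-variables False, and J (1,1)-variables, the corresponding solution has length 2(n+1) + 4K₁ + 2K₂ + 2J = 4n + 2 + 2K₁.) -/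
namespace SatLD
open List

variable {β : Type*}

inductive LD : List β → Prop
  | single (a : β) (d : ℕ) (h2 : 2 ≤ d) : LD (List.replicate d a)
  | block (a : β) (d : ℕ) (h2 : 2 ≤ d) (l : List β) (hl : LD l)
      (hne : l.head? ≠ some a) : LD (List.replicate d a ++ l)

lemma LD.two_le_length {l : List β} (h : LD l) : 2 ≤ l.length := by
  cases h with
  | single a d h2 => simpa using h2
  | block a d h2 l hl hne => simp; omega

lemma LD.ne_nil {l : List β} (h : LD l) : l ≠ [] := by
  intro hl; have := h.two_le_length; rw [hl] at this; simp at this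

lemma head?_replicate_append (a : β) {d : ℕ} (hd : 1 ≤ d) (l : List β) :
    (List.replicate d a ++ l).head? = some a := by
  cases d with
  | zero => omega
  | succ e => simp [List.replicate_succ]

lemma getLast?_replicate_append (a : β) {d : ℕ} (hd : 1 ≤ d) :
    (List.replicate d a).getLast? = some a := by
  cases d with
  | zero => omega
  | succ e =>
    rw [List.replicate_succ' (n := e) (a := a), List.getLast?_append]
    simp

lemma blocks_LD : ∀ bs : List (β × ℕ), bs ≠ [] → (∀ p ∈ bs, 2 ≤ p.2) →
    List.Chain' (fun p q => p.1 ≠ q.1) bs →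
    LD ((bs.map fun p => List.replicate p.2 p.1).flatten) := by
  intro bs
  induction bs with
  | nil => intro h; exact absurd rfl h
  | cons p bs ih =>
    intro _ h2 hch
    cases bs with
    | nil => simpa using LD.single p.1 p.2 (h2 p (by simp))
    | cons q bs' =>
      have hrest : LD (((q :: bs').map fun p => List.replicate p.2 p.1).flatten) :=
        ih (by simp) (fun r hr => h2 r (List.mem_cons_of_mem _ hr)) hch.tail
      simp only [List.map_cons, List.flatten_cons] at hrest ⊢
      refine LD.block p.1 p.2 (h2 p (by simp)) _ hrest ?_
      rw [head?_replicate_append q.1 (by have := h2 q (by simp); omega) _]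
      simp only [ne_eq, Option.some.injEq]
      exact (List.isChain_cons_cons.mp hch).1.symm

lemma decomp_head {bs : List (β × ℕ)} {l : List β} (h : IsBlockDecomp bs l) :
    ∃ p bs', bs = p :: bs' ∧ l.head? = some p.1 := by
  obtain ⟨hne, h2, hch, rfl⟩ := h
  cases bs with
  | nil => exact absurd rfl hne
  | cons p bs' =>
    refine ⟨p, bs', rfl, ?_⟩
    simp only [List.map_cons, List.flatten_cons]
    exact head?_replicate_append p.1 (by have := h2 p (by simp); omega) _

lemma isLD_iff (l : List β) : IsLDString l ↔ LD l := by
  constructor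
  · rintro ⟨bs, hne, h2, hch, rfl⟩
    exact blocks_LD bs hne h2 hch
  · intro h
    induction h with
    | single a d h2 =>
      exact ⟨[(a, d)], by simp, by simp; omega, List.isChain_singleton _, by simp⟩
    | block a d h2 l hl hne ih =>
      obtain ⟨bs, hbs⟩ := ih
      obtain ⟨p, bs', rfl, hh⟩ := decomp_head hbs
      refine ⟨(a, d) :: p :: bs', by simp, ?_, ?_, ?_⟩
      · intro r hr
        rcases List.mem_cons.mp hr with rfl | hr
        · exact h2
        · exact hbs.2.1 r hr
      · refine List.isChain_cons_cons.mpr ⟨?_, hbs.2.2.1⟩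
        intro hap
        exact hne (hh.trans (congrArg some hap.symm))
      · rw [hbs.2.2.2]; simp

lemma LD.count_ge [DecidableEq β] {l : List β} (h : LD l) {x : β} (hx : x ∈ l) :
    2 ≤ l.count x := by
  induction h with
  | single a d h2 =>
    have := List.eq_of_mem_replicate hx; subst this
    simpa using h2
  | block a d h2 l hl hne ih =>
    rw [List.count_append]
    rcases List.mem_append.mp hx with hx | hx
    · have := List.eq_of_mem_replicate hx; subst this
      have : (List.replicate d x).count x = d := by simp
      omega
    · have := ih hx; omega

lemma LD.append {u w : List β} (hu : LD u) (hw : LD w)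
    (hne : ∀ a, u.getLast? = some a → w.head? ≠ some a) : LD (u ++ w) := by
  induction hu with
  | single a d h2 =>
    exact LD.block a d h2 w hw (hne a (getLast?_replicate_append a (by omega)))
  | block a d h2 l hl hne' ih =>
    rw [List.append_assoc]
    refine LD.block a d h2 _ (ih ?_) ?_
    · intro b hb
      apply hne b
      rw [List.getLast?_append, hb]
      simp
    · rw [List.head?_append_of_ne_nil _ hl.ne_nil]
      exact hne'


lemma head?_replicate' {a c : β} {d : ℕ} (h : (List.replicate d a).head? = some c) :
    c = a ∧ 1 ≤ d := by
  cases d with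
  | zero => simp at h
  | succ e => simp [List.replicate_succ] at h; exact ⟨h.symm, by omega⟩

/-- Splitting an LD string at a position whose letter does not occur before it. -/
lemma LD.split : ∀ {w : List β}, LD w → ∀ s u c, w = s ++ u → u.head? = some c → c ∉ s →
    (s = [] ∨ LD s) ∧ LD u := by
  intro w h
  induction h with
  | single a d h2 =>
    intro s u c hw hc hcs
    have hlen : s.length + u.length = d := by
      have := congrArg List.length hw; simp at this; omega
    have hs : s = List.replicate s.length a := by
      have h1 : s = (List.replicate d a).take s.length := by
        rw [hw, List.take_append_of_le_length le_rfl, List.take_length]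
      rw [List.take_replicate, Nat.min_eq_left (by omega)] at h1
      exact h1
    have hu : u = List.replicate (d - s.length) a := by
      have h1 : u = (List.replicate d a).drop s.length := by
        rw [hw, List.drop_append_of_le_length le_rfl, List.drop_length, List.nil_append]
      rw [List.drop_replicate] at h1
      exact h1
    have hca : c = a := (head?_replicate' (hu ▸ hc)).1
    have hs0 : s.length = 0 := by
      by_contra h0
      exact hcs (by rw [hs]; exact List.mem_replicate.mpr ⟨h0, hca⟩)
    have hsnil : s = [] := List.length_eq_zero_iff.mp hs0
    refine ⟨Or.inl hsnil, ?_⟩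
    have : u = List.replicate d a := by rw [hsnil] at hw; simpa using hw.symm
    rw [this]; exact LD.single a d h2
  | block a d h2 l hl hne ih =>
    intro s u c hw hc hcs
    rcases le_or_gt s.length d with hle | hlt
    · -- s fits into the replicate-block
      have hs : s = List.replicate s.length a := by
        have h1 : s = (List.replicate d a ++ l).take s.length := by
          rw [hw, List.take_append_of_le_length le_rfl, List.take_length]
        rw [List.take_append_of_le_length (by simpa using hle), List.take_replicate,
          Nat.min_eq_left (by omega)] at h1
        exact h1
      have hu : u = List.replicate (d - s.length) a ++ l := by
        have h1 : u = (List.replicate d a ++ l).drop s.length := by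
          rw [hw, List.drop_append_of_le_length le_rfl, List.drop_length, List.nil_append]
        rw [List.drop_append, List.drop_replicate, List.length_replicate,
          Nat.sub_eq_zero_of_le hle, List.drop_zero] at h1
        exact h1
      by_cases hs0 : s.length = 0
      · have hsnil : s = [] := List.length_eq_zero_iff.mp hs0
        refine ⟨Or.inl hsnil, ?_⟩
        have : u = List.replicate d a ++ l := by rw [hsnil] at hw; simpa using hw.symm
        rw [this]; exact LD.block a d h2 l hl hne
      · -- a ∈ s, hence c ≠ a, hence s.length = d and u = l
        have hca : c ≠ a := by
          intro hca
          exact hcs (by rw [hs]; exact List.mem_replicate.mpr ⟨hs0, hca⟩)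
        have hsd : s.length = d := by
          by_contra hne'
          have h1 : 1 ≤ d - s.length := by omega
          obtain ⟨e, he⟩ : ∃ e, d - s.length = e + 1 := ⟨d - s.length - 1, by omega⟩
          rw [hu, he, List.replicate_succ] at hc
          simp at hc
          exact hca hc.symm
        refine ⟨Or.inr ?_, ?_⟩
        · rw [hs, hsd]; exact LD.single a d h2
        · rw [hu, hsd, Nat.sub_self]; simpa using hl
    · -- s extends beyond the replicate-block
      have htake : s.take d = List.replicate d a := by
        have h1 : (s ++ u).take d = s.take d := List.take_append_of_le_length (by omega)
        rw [← hw] at h1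
        rw [List.take_append_of_le_length (by simp), List.take_replicate, Nat.min_self] at h1
        exact h1.symm
      have hsplit : s = List.replicate d a ++ s.drop d := by
        rw [← htake, List.take_append_drop]
      have hl' : l = s.drop d ++ u := by
        have h1 : (s ++ u).drop d = s.drop d ++ u := by
          rw [List.drop_append, Nat.sub_eq_zero_of_le (by omega), List.drop_zero]
        rw [← hw] at h1
        rw [List.drop_append, List.drop_replicate, List.length_replicate,
          Nat.sub_self, List.drop_zero] at h1
        simp only [Nat.sub_self, List.replicate_zero, List.nil_append] at h1
        exact h1
      have hs' : s.drop d ≠ [] := by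
        have : (s.drop d).length = s.length - d := by simp
        intro h0; rw [h0] at this; simp at this; omega
      have hcs' : c ∉ s.drop d := fun hm => hcs (by rw [hsplit]; exact List.mem_append_right _ hm)
      obtain ⟨h1, h2u⟩ := ih (s.drop d) u c hl' hc hcs'
      have hLDs' : LD (s.drop d) := h1.resolve_left hs'
      refine ⟨Or.inr ?_, h2u⟩
      rw [hsplit]
      refine LD.block a d h2 _ hLDs' ?_
      rw [← List.head?_append_of_ne_nil (s.drop d) hs' (l₂ := u), ← hl']
      exact hne


/-- extract the two leading copies of `g` from a sublist. -/
lemma split2 [DecidableEq β] {u w : List β} {g : β} (hsub : u.Sublist (g :: g :: w))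
    (hgw : g ∉ w) (hcnt : u.count g = 2) : ∃ s, u = g :: g :: s ∧ s.Sublist w := by
  rcases List.sublist_cons_iff.mp hsub with h1 | ⟨r, rfl, hr⟩
  · rcases List.sublist_cons_iff.mp h1 with h2 | ⟨r, rfl, hr⟩
    · have := h2.count_le g
      rw [List.count_eq_zero.mpr hgw] at this
      omega
    · have := hr.count_le g
      rw [List.count_eq_zero.mpr hgw] at this
      simp [List.count_cons] at hcnt
      omega
  · rcases List.sublist_cons_iff.mp hr with h2 | ⟨r', rfl, hr'⟩
    · have := h2.count_le g
      rw [List.count_eq_zero.mpr hgw] at this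
      simp [List.count_cons] at hcnt
      omega
    · exact ⟨r', rfl, hr'⟩

/-- peel the leading `[g, g]` block off an LD string. -/
lemma LD.peel [DecidableEq β] {t : List β} {g : β} (h : LD (g :: g :: t))
    (hgt : g ∉ t) : t = [] ∨ LD t := by
  generalize hE : g :: g :: t = w at h
  induction h with
  | single a d h2 =>
    have hag : a = g := by
      have : g ∈ List.replicate d a := by rw [← hE]; simp
      exact (List.eq_of_mem_replicate this).symm
    subst hag
    have hcnt : (List.replicate d a).count a = d := by simp
    rw [← hE] at hcnt
    simp [List.count_cons, List.count_eq_zero.mpr hgt] at hcnt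
    have hd : d = 2 := by omega
    subst hd
    left
    have h22 : List.replicate 2 a = [a, a] := rfl
    rw [h22] at hE
    simpa using hE
  | block a d h2 l hl hne ih =>
    have hag : a = g := by
      have h1 := head?_replicate_append a (d := d) (by omega) l
      rw [← hE] at h1
      have h1' : g = a := by simpa using h1
      exact h1'.symm
    subst hag
    have hcl : l.count a + d = 2 := by
      have h1 : (List.replicate d a ++ l).count a = d + l.count a := by simp
      rw [← hE] at h1
      simp [List.count_cons, List.count_eq_zero.mpr hgt] at h1
      omega
    have hd : d = 2 := by omega
    subst hd
    have h22 : List.replicate 2 a ++ l = a :: a :: l := rfl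
    rw [h22] at hE
    simp at hE
    right
    rw [hE]
    exact hl


def GS (gs : List β) (Ls : List (List β)) : List β :=
  (List.zipWith (fun g L => g :: g :: L) gs Ls).flatten

lemma GS_nil (Ls : List (List β)) : GS ([] : List β) Ls = [] := rfl

lemma GS_nil' (gs : List β) : GS gs ([] : List (List β)) = [] := by
  cases gs <;> rfl

lemma GS_cons (g : β) (gs : List β) (L : List β) (Ls : List (List β)) :
    GS (g :: gs) (L :: Ls) = g :: g :: (L ++ GS gs Ls) := by
  simp [GS]

lemma mem_GS {a : β} : ∀ {gs : List β} {Ls : List (List β)}, a ∈ GS gs Ls →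
    a ∈ gs ∨ ∃ L ∈ Ls, a ∈ L := by
  intro gs
  induction gs with
  | nil => intro Ls h; rw [GS_nil] at h; simp at h
  | cons g gs ih =>
    intro Ls h
    cases Ls with
    | nil => rw [GS_nil'] at h; simp at h
    | cons L Ls =>
      rw [GS_cons] at h
      simp only [List.mem_cons, List.mem_append] at h
      rcases h with rfl | rfl | h | h
      · exact Or.inl (by simp)
      · exact Or.inl (by simp)
      · exact Or.inr ⟨L, by simp, h⟩
      · rcases ih h with h | ⟨L', hL', h⟩
        · exact Or.inl (by simp [h])
        · exact Or.inr ⟨L', by simp [hL'], h⟩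

lemma key [DecidableEq β] : ∀ (gs : List β) (Ls : List (List β)) (l : List β),
    gs.length = Ls.length → gs.Nodup →
    (∀ L ∈ Ls, ∀ a ∈ L, a ∉ gs) →
    l.Sublist (GS gs Ls) → LD l → (∀ g ∈ gs, g ∈ l) →
    ∃ ss : List (List β), List.Forall₂ (fun s L => s.Sublist L ∧ (s = [] ∨ LD s)) ss Ls ∧
      l = GS gs ss := by
  intro gs
  induction gs with
  | nil =>
    intro Ls l _ _ _ hsub hLD _
    rw [GS_nil] at hsub
    exact absurd (List.sublist_nil.mp hsub) hLD.ne_nil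
  | cons g gs' IH =>
    intro Ls l hlen hnd hdis hsub hLD hgl
    cases Ls with
    | nil => simp at hlen
    | cons L Ls' =>
    have hlen' : gs'.length = Ls'.length := by simpa using hlen
    have hgL : g ∉ L := fun h => hdis L (by simp) g h (by simp)
    have hgrest : g ∉ GS gs' Ls' := by
      intro hm
      rcases mem_GS hm with h | ⟨L', hL', h⟩
      · exact (List.nodup_cons.mp hnd).1 h
      · exact hdis L' (by simp [hL']) g h (by simp)
    have hcnt : l.count g = 2 := by
      have hle : l.count g ≤ 2 := by
        have h1 := hsub.count_le g
        rw [GS_cons] at h1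
        simp only [List.count_cons, List.count_append, List.count_eq_zero.mpr hgL,
          List.count_eq_zero.mpr hgrest] at h1
        simpa using h1
      have hge := hLD.count_ge (hgl g (by simp))
      omega
    have hsub' : l.Sublist (g :: g :: (L ++ GS gs' Ls')) := by rw [GS_cons] at hsub; exact hsub
    obtain ⟨t, rfl, ht⟩ := split2 hsub' (by simp [hgL, hgrest]) hcnt
    have hgt : g ∉ t := List.count_eq_zero.mp (by simp [List.count_cons] at hcnt; omega)
    have hldt : t = [] ∨ LD t := hLD.peel hgt
    obtain ⟨s₁, l₂, rfl, hs₁, hl₂⟩ := List.sublist_append_iff.mp ht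
    cases gs' with
    | nil =>
      have hLs' : Ls' = [] := by simpa using hlen'.symm
      subst hLs'
      rw [GS_nil] at hl₂
      have hl₂e : l₂ = [] := List.sublist_nil.mp hl₂
      subst hl₂e
      refine ⟨[s₁ ++ []], ?_, ?_⟩
      · refine List.Forall₂.cons ⟨by simpa using hs₁, by simpa using hldt⟩ List.Forall₂.nil
      · rw [GS_cons, GS_nil]
        simp
    | cons g' gs'' =>
      cases Ls' with
      | nil => simp at hlen'
      | cons L' Ls'' =>
      have hg'g : g' ≠ g := by
        intro h
        exact (List.nodup_cons.mp hnd).1 (by simp [h])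
      have hg'L : g' ∉ L := fun h => hdis L (by simp) g' h (by simp)
      have hg'L' : g' ∉ L' := fun h => hdis L' (by simp) g' h (by simp)
      have hg'rest2 : g' ∉ GS gs'' Ls'' := by
        intro hm
        rcases mem_GS hm with h | ⟨L'', hL'', h⟩
        · exact ((List.nodup_cons.mp (List.Nodup.of_cons hnd)).1) h
        · exact hdis L'' (by simp [hL'']) g' h (by simp)
      have hg's₁ : g' ∉ s₁ := fun h => hg'L (hs₁.subset h)
      have hg'inl2 : g' ∈ l₂ := by
        have h1 : g' ∈ g :: g :: (s₁ ++ l₂) := hgl g' (by simp)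
        simp only [List.mem_cons, List.mem_append] at h1
        rcases h1 with h | h | h | h
        · exact absurd h hg'g
        · exact absurd h hg'g
        · exact absurd h hg's₁
        · exact h
      have hcnt2 : l₂.count g' = 2 := by
        have hle : l₂.count g' ≤ 2 := by
          have h1 := hl₂.count_le g'
          rw [GS_cons] at h1
          simp only [List.count_cons, List.count_append, List.count_eq_zero.mpr hg'L',
            List.count_eq_zero.mpr hg'rest2] at h1
          simpa using h1
        have hge : 2 ≤ (g :: g :: (s₁ ++ l₂)).count g' :=
          hLD.count_ge (hgl g' (by simp))
        simp only [List.count_cons, List.count_append, List.count_eq_zero.mpr hg's₁,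
          beq_iff_eq, if_neg (Ne.symm hg'g)] at hge
        omega
      have hsub2 : l₂.Sublist (g' :: g' :: (L' ++ GS gs'' Ls'')) := by
        rw [GS_cons] at hl₂; exact hl₂
      obtain ⟨t₂, heq2, ht₂⟩ := split2 hsub2 (by simp [hg'L', hg'rest2]) hcnt2
      have hl₂ne : l₂ ≠ [] := by rw [heq2]; simp
      have hLDt : LD (s₁ ++ l₂) := by
        rcases hldt with h | h
        · exact absurd (by simpa using (List.append_eq_nil_iff.mp h).2) hl₂ne
        · exact h
      obtain ⟨hs1ok, hLDl₂⟩ := hLDt.split s₁ l₂ g' rfl (by rw [heq2]; rfl) hg's₁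
      have hmem2 : ∀ h ∈ g' :: gs'', h ∈ l₂ := by
        intro x hx
        have hxg : x ≠ g := by
          intro h; subst h
          exact (List.nodup_cons.mp hnd).1 hx
        have hxs₁ : x ∉ s₁ := by
          intro h
          exact hdis L (by simp) x (hs₁.subset h) (by simp [hx])
        have h1 : x ∈ g :: g :: (s₁ ++ l₂) := hgl x (by simp [hx])
        simp only [List.mem_cons, List.mem_append] at h1
        rcases h1 with h | h | h | h
        · exact absurd h hxg
        · exact absurd h hxg
        · exact absurd h hxs₁
        · exact h
      obtain ⟨ss', hF', hl₂eq⟩ := IH (L' :: Ls'') l₂ hlen' (List.Nodup.of_cons hnd)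
        (fun M hM a ha hmem => hdis M (by simp [hM]) a ha (by simp at hmem ⊢; tauto))
        hl₂ hLDl₂ hmem2
      refine ⟨s₁ :: ss', List.Forall₂.cons ⟨hs₁, hs1ok⟩ hF', ?_⟩
      rw [GS_cons, hl₂eq]


lemma GS_sublist : ∀ (gs : List β) {ss Ls : List (List β)},
    List.Forall₂ (fun s L => s.Sublist L) ss Ls → (GS gs ss).Sublist (GS gs Ls) := by
  intro gs
  induction gs with
  | nil => intro ss Ls _; rw [GS_nil]; exact List.nil_sublist _
  | cons g gs ih =>
    intro ss Ls hF
    cases hF with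
    | nil => simp [GS_nil']
    | cons hsL hF =>
      rw [GS_cons, GS_cons]
      exact List.Sublist.cons₂ g (List.Sublist.cons₂ g (List.Sublist.append hsL (ih hF)))

lemma GS_LD : ∀ (gs : List β) (ss : List (List β)), gs.length = ss.length → gs ≠ [] →
    List.Chain' (· ≠ ·) gs → (∀ s ∈ ss, ∀ a ∈ s, a ∉ gs) →
    (∀ s ∈ ss, s = [] ∨ LD s) → LD (GS gs ss) := by
  intro gs
  induction gs with
  | nil => intro ss _ h; exact absurd rfl h
  | cons g gs ih =>
    intro ss hlen _ hch hdis hss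
    cases ss with
    | nil => simp at hlen
    | cons s ss =>
      have hpiece : LD (g :: g :: s) := by
        rcases hss s (by simp) with rfl | hLDs
        · exact LD.single g 2 le_rfl
        · have : g :: g :: s = List.replicate 2 g ++ s := rfl
          rw [this]
          refine LD.block g 2 le_rfl s hLDs ?_
          intro hh
          have : g ∈ s := List.mem_of_mem_head? (by rw [hh]; rfl)
          exact hdis s (by simp) g this (by simp)
      cases gs with
      | nil =>
        have : ss = [] := by simpa using hlen.symm
        subst this
        rw [GS_cons, GS_nil]
        simpa using hpiece
      | cons g' gs' =>
        cases ss with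
        | nil => simp at hlen
        | cons s' ss' =>
          rw [GS_cons]
          have hrest : LD (GS (g' :: gs') (s' :: ss')) := by
            refine ih _ (by simpa using hlen) (by simp) hch.tail ?_ ?_
            · intro u hu a ha hmem
              exact hdis u (by simp [hu]) a ha (by simp at hmem ⊢; tauto)
            · intro u hu
              exact hss u (by simp [hu])
          have hchange : g :: g :: (s ++ GS (g' :: gs') (s' :: ss')) =
              (g :: g :: s) ++ GS (g' :: gs') (s' :: ss') := by simp
          rw [hchange]
          refine hpiece.append hrest ?_
          intro b hb hhead
          have hhg' : (GS (g' :: gs') (s' :: ss')).head? = some g' := by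
            rw [GS_cons]; rfl
          rw [hhg'] at hhead
          simp only [Option.some.injEq] at hhead
          subst hhead
          have hbg : g' ∈ g :: g :: s := by
        
            obtain ⟨hne', heq'⟩ := List.mem_getLast?_eq_getLast (x := g') (by rw [hb]; rfl)
            rw [heq']
            exact List.getLast_mem hne'
          simp only [List.mem_cons] at hbg
          rcases hbg with rfl | rfl | hbg
          · exact (List.isChain_cons_cons.mp hch).1 rfl
          · exact (List.isChain_cons_cons.mp hch).1 rfl
          · exact hdis s (by simp) g' hbg (by simp)

lemma GS_length : ∀ (gs : List β) (ss : List (List β)), gs.length = ss.length →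
    (GS gs ss).length = 2 * ss.length + (ss.map List.length).sum := by
  intro gs
  induction gs with
  | nil =>
    intro ss hlen
    have : ss = [] := by simpa using hlen.symm
    subst this; simp [GS_nil]
  | cons g gs ih =>
    intro ss hlen
    cases ss with
    | nil => simp at hlen
    | cons s ss =>
      rw [GS_cons]
      simp only [List.length_cons, List.length_append, List.map_cons, List.sum_cons]
      rw [ih ss (by simpa using hlen)]
      ring

lemma GS_mem_intro : ∀ (gs : List β) (ss : List (List β)) (i : ℕ)
    (hg : i < gs.length) (hs : i < ss.length) {a : β}
    (ha : a ∈ gs[i] :: gs[i] :: ss[i]), a ∈ GS gs ss := by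
  intro gs
  induction gs with
  | nil => intro ss i hg; simp at hg
  | cons g gs ih =>
    intro ss i hg hs a ha
    cases ss with
    | nil => simp at hs
    | cons s ss =>
      rw [GS_cons]
      cases i with
      | zero =>
        simp only [List.getElem_cons_zero] at ha
        simp only [List.mem_cons, List.mem_append] at ha ⊢
        tauto
      | succ i =>
        simp only [List.getElem_cons_succ] at ha
        have := ih ss i (by simpa using hg) (by simpa using hs) ha
        simp only [List.mem_cons, List.mem_append]
        tauto

lemma GS_mem_elim : ∀ (gs : List β) (ss : List (List β)) {a : β}, a ∈ GS gs ss →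
    ∃ i : ℕ, ∃ (hg : i < gs.length) (hs : i < ss.length),
      a ∈ gs[i] :: gs[i] :: ss[i] := by
  intro gs
  induction gs with
  | nil => intro ss a h; rw [GS_nil] at h; simp at h
  | cons g gs ih =>
    intro ss a h
    cases ss with
    | nil => rw [GS_nil'] at h; simp at h
    | cons s ss =>
      rw [GS_cons] at h
      simp only [List.mem_cons, List.mem_append] at h
      rcases h with rfl | rfl | h | h
      · exact ⟨0, by simp, by simp, by simp⟩
      · exact ⟨0, by simp, by simp, by simp⟩
      · exact ⟨0, by simp, by simp, by simp [h]⟩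
      · obtain ⟨i, hg, hs, hmem⟩ := ih ss h
        exact ⟨i + 1, by simpa using hg, by simpa using hs, by simpa using hmem⟩


def dbl (xs : List β) : List β := (xs.map fun y => [y, y]).flatten

lemma dbl_cons (x : β) (xs : List β) : dbl (x :: xs) = x :: x :: dbl xs := rfl

lemma length_dbl : ∀ xs : List β, (dbl xs).length = 2 * xs.length := by
  intro xs
  induction xs with
  | nil => rfl
  | cons x xs ih => rw [dbl_cons]; simp [ih]; ring

lemma mem_dbl {x : β} {xs : List β} (hx : x ∈ xs) : x ∈ dbl xs := by
  exact List.mem_flatten.mpr ⟨[x, x], List.mem_map.mpr ⟨x, hx, rfl⟩, by simp⟩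

lemma LD.blocks2 [DecidableEq β] {s : List β} (h : LD s) (hc : ∀ x, s.count x ≤ 2) :
    ∃ xs, xs ≠ [] ∧ List.Chain' (· ≠ ·) xs ∧ s = dbl xs := by
  induction h with
  | single a d h2 =>
    have hca : (List.replicate d a).count a = d := by simp
    have hd : d = 2 := by have := hc a; omega
    subst hd
    exact ⟨[a], by simp, List.isChain_singleton _, rfl⟩
  | block a d h2 l hl hne ih =>
    have hcl : ∀ x, l.count x ≤ 2 := by
      intro x
      have h1 : (List.replicate d a ++ l).count x = (List.replicate d a).count x + l.count x :=
        List.count_append ..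
      have := hc x
      omega
    obtain ⟨xs, hne', hch, rfl⟩ := ih hcl
    have hda : (List.replicate d a ++ dbl xs).count a = d + (dbl xs).count a := by simp
    have hd : d = 2 := by have := hc a; omega
    subst hd
    obtain ⟨x₁, xs', rfl⟩ := List.exists_cons_of_ne_nil hne'
    have hx₁a : x₁ ≠ a := by
      intro hh
      exact hne (by rw [dbl_cons, hh]; rfl)
    exact ⟨a :: x₁ :: xs', by simp, List.isChain_cons_cons.mpr ⟨Ne.symm hx₁a, hch⟩, rfl⟩

lemma classify11 [DecidableEq β] {j k : β} (hjk : j ≠ k) {s : List β}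
    (hsub : s.Sublist [j, k, k, j]) (h : LD s) : s = [j, j] ∨ s = [k, k] := by
  have hc : ∀ x, s.count x ≤ 2 := by
    intro x
    refine (hsub.count_le x).trans ?_
    rcases eq_or_ne x j with rfl | hxj <;> rcases eq_or_ne x k with rfl | hxk <;>
      simp_all [List.count_cons] <;> split_ifs <;> simp_all
  obtain ⟨xs, hne, hch, rfl⟩ := h.blocks2 hc
  have hmem : ∀ x ∈ xs, x = j ∨ x = k := by
    intro x hx
    have := hsub.subset (mem_dbl hx)
    simp at this
    tauto
  have hlen : 2 * xs.length ≤ 4 := by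
    have := hsub.length_le
    rw [length_dbl] at this
    simpa using this
  rcases xs with _ | ⟨x, _ | ⟨y, _ | ⟨z, rest⟩⟩⟩
  · exact absurd rfl hne
  · rcases hmem x (by simp) with h1 | h1
    · exact Or.inl (by rw [h1]; rfl)
    · exact Or.inr (by rw [h1]; rfl)
  · exfalso
    have hxy : x ≠ y := (List.isChain_cons_cons.mp hch).1
    have h4 : ([x, x, y, y] : List β).Sublist [j, k, k, j] := hsub
    rcases hmem x (by simp) with h1 | h1 <;> rcases hmem y (by simp) with h2 | h2
    · exact hxy (h1.trans h2.symm)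
    · rw [h1, h2] at h4
      have h3 := h4.eq_of_length rfl
      simp_all
    · rw [h1, h2] at h4
      have h3 := h4.eq_of_length rfl
      simp_all
    · exact hxy (h1.trans h2.symm)
  · exfalso; simp at hlen; omega

lemma classify21 [DecidableEq β] {j k l : β} (hjk : j ≠ k) (hjl : j ≠ l) (hkl : k ≠ l)
    {s : List β} (hsub : s.Sublist [j, l, j, k, l, k]) (h : LD s) :
    s = [j, j] ∨ s = [k, k] ∨ s = [l, l] ∨ s = [j, j, k, k] := by
  have pair : ∀ x y : β, x ≠ y → (x = j ∨ x = k ∨ x = l) → (y = j ∨ y = k ∨ y = l) →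
      (dbl [x, y]).Sublist [j, l, j, k, l, k] → x = j ∧ y = k := by
    intro x y hxy hx hy hs
    have h4 : ([x, x, y, y] : List β).Sublist [j, l, j, k, l, k] := hs
    rcases hx with h1 | h1 | h1 <;> rcases hy with h2 | h2 | h2 <;> rw [h1, h2] at h4
    · exact absurd (h1.trans h2.symm) hxy
    · exact ⟨h1, h2⟩
    · -- (j, l)
      exfalso
      have h2 := h4.filter (fun z => decide (z ≠ k))
      simp [hjk, hjl, hkl, Ne.symm hjk, Ne.symm hjl, Ne.symm hkl] at h2
      have h3 := h2.eq_of_length rfl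
      simp_all
    · -- (k, j)
      exfalso
      have h2 := h4.filter (fun z => decide (z ≠ l))
      simp [hjk, hjl, hkl, Ne.symm hjk, Ne.symm hjl, Ne.symm hkl] at h2
      have h3 := h2.eq_of_length rfl
      simp_all
    · exact absurd (h1.trans h2.symm) hxy
    · -- (k, l)
      exfalso
      have h2 := h4.filter (fun z => decide (z ≠ j))
      simp [hjk, hjl, hkl, Ne.symm hjk, Ne.symm hjl, Ne.symm hkl] at h2
      have h3 := h2.eq_of_length rfl
      simp_all
    · -- (l, j)
      exfalso
      have h2 := h4.filter (fun z => decide (z ≠ k))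
      simp [hjk, hjl, hkl, Ne.symm hjk, Ne.symm hjl, Ne.symm hkl] at h2
      have h3 := h2.eq_of_length rfl
      simp_all
    · -- (l, k)
      exfalso
      have h2 := h4.filter (fun z => decide (z ≠ j))
      simp [hjk, hjl, hkl, Ne.symm hjk, Ne.symm hjl, Ne.symm hkl] at h2
      have h3 := h2.eq_of_length rfl
      simp_all
    · exact absurd (h1.trans h2.symm) hxy
  have hc : ∀ x, s.count x ≤ 2 := by
    intro x
    refine (hsub.count_le x).trans ?_
    rcases eq_or_ne x j with rfl | hxj <;> rcases eq_or_ne x k with rfl | hxk <;>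
      rcases eq_or_ne x l with rfl | hxl <;> simp_all [List.count_cons] <;> split_ifs <;> simp_all
  obtain ⟨xs, hne, hch, rfl⟩ := h.blocks2 hc
  have hmem : ∀ x ∈ xs, x = j ∨ x = k ∨ x = l := by
    intro x hx
    have := hsub.subset (mem_dbl hx)
    simp at this
    tauto
  have hlen : 2 * xs.length ≤ 6 := by
    have := hsub.length_le
    rw [length_dbl] at this
    simpa using this
  rcases xs with _ | ⟨x, _ | ⟨y, _ | ⟨z, _ | ⟨w, rest⟩⟩⟩⟩
  · exact absurd rfl hne
  · rcases hmem x (by simp) with h1 | h1 | h1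
    · exact Or.inl (by rw [h1]; rfl)
    · exact Or.inr (Or.inl (by rw [h1]; rfl))
    · exact Or.inr (Or.inr (Or.inl (by rw [h1]; rfl)))
  · have hxy : x ≠ y := (List.isChain_cons_cons.mp hch).1
    obtain ⟨h1, h2⟩ := pair x y hxy (hmem x (by simp)) (hmem y (by simp)) hsub
    exact Or.inr (Or.inr (Or.inr (by rw [h1, h2]; rfl)))
  · exfalso
    have hxy : x ≠ y := (List.isChain_cons_cons.mp hch).1
    have hyz : y ≠ z := (List.isChain_cons_cons.mp (List.isChain_cons_cons.mp hch).2).1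
    have hsub1 : (dbl [x, y]).Sublist (dbl [x, y, z]) := by
      have hh : dbl [x, y, z] = dbl [x, y] ++ [z, z] := rfl
      rw [hh]
      exact List.sublist_append_left _ _
    have hsub2 : (dbl [y, z]).Sublist (dbl [x, y, z]) := by
      have hh : dbl [x, y, z] = [x, x] ++ dbl [y, z] := rfl
      rw [hh]
      exact List.sublist_append_right _ _
    obtain ⟨hx1, hy1⟩ := pair x y hxy (hmem x (by simp)) (hmem y (by simp)) (hsub1.trans hsub)
    obtain ⟨hy2, -⟩ := pair y z hyz (hmem y (by simp)) (hmem z (by simp)) (hsub2.trans hsub)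
    exact hjk (hy2.symm.trans hy1)
  · exfalso; simp at hlen; omega

end SatLD



/-- the chosen sub-gadget of `L_i` corresponding to a truth value. -/
def segChoice {m : ℕ} {β : Type*} (f : Fin m → β) (vi : VarInfo m) (b : Bool) : List β :=
  match vi with
  | .one j k => if b then [f j, f j] else [f k, f k]
  | .two j k l => if b then [f j, f j, f k, f k] else [f l, f l]

/-- truth value read off from a sub-gadget of `L_i`. -/
def segTau {m : ℕ} {β : Type*} [DecidableEq β] (vi : VarInfo m) (f : Fin m → β) (s : List β) : Bool :=
  match vi with
  | .one j _ => decide (s = [f j, f j])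
  | .two j k _ => decide (s = [f j, f j] ∨ s = [f k, f k] ∨ s = [f j, f j, f k, f k])


lemma satString_eq_GS (m n : ℕ) (v : Fin n → VarInfo m) :
    satString m n v = SatLD.GS ((List.finRange (n+1)).map Sum.inr)
      (((List.finRange n).map fun i => (v i).Lblock.map Sum.inl) ++ [[]]) := by
  unfold SatLD.GS satString
  rw [List.finRange_succ_last, List.map_append, List.map_map,
    List.zipWith_append (by simp), List.zipWith_map, List.zipWith_self]
  simp


namespace SatLD

lemma forall2_aux {γ : Type*} {R : List β → List β → Prop} {f g : γ → List β} (u w : List β)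
    (hR : ∀ x, R (f x) (g x)) (hu : R u w) :
    ∀ t : List γ, List.Forall₂ R (t.map f ++ [u]) (t.map g ++ [w])
  | [] => List.Forall₂.cons hu List.Forall₂.nil
  | x :: t => List.Forall₂.cons (hR x) (forall2_aux u w hR hu t)

variable {β : Type*}

lemma segChoice_sublist {m : ℕ} {β : Type*} (f : Fin m → β) (vi : VarInfo m) (b : Bool) :
    (segChoice f vi b).Sublist (vi.Lblock.map f) := by
  cases vi with
  | one j k =>
    cases b with
    | true =>
      show ([f j, f j] : List β).Sublist [f j, f k, f k, f j]
      exact .cons₂ _ (.cons _ (.cons _ (.cons₂ _ .slnil)))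
    | false =>
      show ([f k, f k] : List β).Sublist [f j, f k, f k, f j]
      exact .cons _ (.cons₂ _ (.cons₂ _ (.cons _ .slnil)))
  | two j k l =>
    cases b with
    | true =>
      show ([f j, f j, f k, f k] : List β).Sublist [f j, f l, f j, f k, f l, f k]
      exact .cons₂ _ (.cons _ (.cons₂ _ (.cons₂ _ (.cons _ (.cons₂ _ .slnil)))))
    | false =>
      show ([f l, f l] : List β).Sublist [f j, f l, f j, f k, f l, f k]
      exact .cons _ (.cons₂ _ (.cons _ (.cons _ (.cons₂ _ (.cons _ .slnil)))))

lemma segChoice_mem {m : ℕ} {β : Type*} {f : Fin m → β} {vi : VarInfo m} {b : Bool} {a : β}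
    (ha : a ∈ segChoice f vi b) : ∃ c : Fin m, a = f c := by
  cases vi <;> cases b <;> simp [segChoice] at ha <;>
    first
      | exact ⟨_, ha⟩
      | (rcases ha with ha | ha; exacts [⟨_, ha⟩, ⟨_, ha⟩])

lemma segChoice_length {m : ℕ} {β : Type*} (f : Fin m → β) (vi : VarInfo m) (b : Bool) :
    (segChoice f vi b).length = 2 + 2 * (if vi.isTwo = true ∧ b = true then 1 else 0) := by
  cases vi <;> cases b <;> simp [segChoice, VarInfo.isTwo]

lemma segChoice_LD {m : ℕ} (vi : VarInfo m) (b : Bool) (hnd : vi.clauses.Nodup)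
    {β : Type*} [DecidableEq β] (f : Fin m → β) (hf : Function.Injective f) :
    LD (segChoice f vi b) := by
  cases vi with
  | one j k =>
    cases b with
    | true => exact LD.single (f j) 2 le_rfl
    | false => exact LD.single (f k) 2 le_rfl
  | two j k l =>
    cases b with
    | true =>
      have hjk : j ≠ k := by simp [VarInfo.clauses] at hnd; tauto
      show LD [f j, f j, f k, f k]
      have : ([f j, f j, f k, f k] : List β) = List.replicate 2 (f j) ++ [f k, f k] := rfl
      rw [this]
      refine LD.block (f j) 2 le_rfl _ (LD.single (f k) 2 le_rfl) ?_
      show some (f k) ≠ some (f j)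
      simp only [ne_eq, Option.some.injEq]
      exact fun h => hjk (hf h).symm
    | false => exact LD.single (f l) 2 le_rfl

end SatLD

/-- The constructed string `S` has a full-appearance LD-subsequence of length at least
`4n + 2 + 2K` iff `φ` has a satisfying assignment with at least `K` of the
`(2,1)`-variables assigned `True`. -/
theorem stmt_10 (m n : ℕ) (v : Fin n → VarInfo m)
    (hnodup : ∀ i : Fin n, (v i).clauses.Nodup)
    (hclause : ∀ c : Fin m, 2 ≤ numLit m n v c ∧ numLit m n v c ≤ 3)
    (K : ℕ) :
    (∃ l : List (Fin m ⊕ Fin (n + 1)), IsLDSubseq l (satString m n v) ∧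
        (∀ a : Fin m ⊕ Fin (n + 1), a ∈ l) ∧ 4 * n + 2 + 2 * K ≤ l.length) ↔
      ∃ τ : Fin n → Bool, SatAssignment m n v τ ∧
        K ≤ (Finset.univ.filter fun i : Fin n => (v i).isTwo = true ∧ τ i = true).card := by
  classical
  set gs : List (Fin m ⊕ Fin (n + 1)) := (List.finRange (n + 1)).map Sum.inr with hgs
  set Ls : List (List (Fin m ⊕ Fin (n + 1))) :=
    ((List.finRange n).map fun i => (v i).Lblock.map Sum.inl) ++ [[]] with hLs
  have hS : satString m n v = SatLD.GS gs Ls := satString_eq_GS m n v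
  have hgslen : gs.length = n + 1 := by simp [hgs]
  have hLslen : Ls.length = n + 1 := by simp [hLs]
  have hgsnd : gs.Nodup :=
    List.Nodup.map (fun a b h => Sum.inr.inj h) (List.nodup_finRange _)
  have hdis : ∀ L ∈ Ls, ∀ a ∈ L, a ∉ gs := by
    intro L hL a ha hags
    obtain ⟨b, -, rfl⟩ := List.mem_map.mp hags
    rcases List.mem_append.mp hL with h | h
    · rcases List.mem_map.mp h with ⟨i, -, rfl⟩
      rcases List.mem_map.mp ha with ⟨c, -, hc⟩
      simp at hc
    · simp at h
      subst h
      simp at ha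
  have hgsget : ∀ (i : ℕ) (hi : i < n + 1), gs[i]'(by rw [hgslen]; exact hi) = Sum.inr ⟨i, hi⟩ := by
    intro i hi
    simp [hgs]
  constructor
  · rintro ⟨l, ⟨hsub, hLDs⟩, hfull, hlen⟩
    have hLD := (SatLD.isLD_iff l).mp hLDs
    rw [hS] at hsub
    obtain ⟨ss, hF, hleq⟩ := SatLD.key gs Ls l (hgslen.trans hLslen.symm) hgsnd hdis hsub hLD
      (fun g _ => hfull g)
    subst hleq
    have hsslen : ss.length = n + 1 := by rw [List.Forall₂.length_eq hF, hLslen]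
    have hget := (List.forall₂_iff_get.mp hF).2
    have hLsget : ∀ (i : ℕ) (hi : i < n),
        Ls[i]'(by rw [hLslen]; omega) = (v ⟨i, hi⟩).Lblock.map Sum.inl := by
      intro i hi
      rw [List.getElem_of_eq hLs, List.getElem_append_left (by simpa using hi)]
      simp
    have hLslast : Ls[n]'(by rw [hLslen]; omega) = [] := by
      rw [List.getElem_of_eq hLs]
      exact List.getElem_concat_length (by simp) _
    have hsslast : ss[n]'(by rw [hsslen]; omega) = [] := by
      have h1 := hget n (by rw [hsslen]; omega) (by rw [hLslen]; omega)
      simp only [List.get_eq_getElem] at h1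
      rw [hLslast] at h1
      exact List.sublist_nil.mp h1.1
    set seg : Fin n → List (Fin m ⊕ Fin (n + 1)) := fun i => ss.getD i.val [] with hsegdef
    have hsegeq : ∀ i : Fin n, seg i = ss[(i : ℕ)]'(by rw [hsslen]; omega) := by
      intro i
      exact List.getD_eq_getElem _ _ _
    have hprop : ∀ i : Fin n, (seg i).Sublist ((v i).Lblock.map Sum.inl) ∧
        (seg i = [] ∨ SatLD.LD (seg i)) := by
      intro i
      have h1 := hget i.val (by rw [hsslen]; omega) (by rw [hLslen]; omega)
      simp only [List.get_eq_getElem] at h1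
      rw [hLsget i.val i.isLt] at h1
      rw [hsegeq i]
      simpa only [Fin.eta] using h1
    have hclass : ∀ i : Fin n,
        ((seg i).length ≤ 2 + 2 * (if (v i).isTwo = true ∧
            segTau (v i) Sum.inl (seg i) = true then 1 else 0)) ∧
        (∀ c : Fin m, Sum.inl c ∈ seg i →
          (v i).satisfied c (segTau (v i) Sum.inl (seg i))) := by
      intro i
      obtain ⟨hsub_i, hld_i⟩ := hprop i
      cases hvi : v i with
      | one j k =>
        have hjk : j ≠ k := by
          have h := hnodup i
          rw [hvi] at h
          simp [VarInfo.clauses] at h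
          exact h
        have hinj : (Sum.inl j : Fin m ⊕ Fin (n + 1)) ≠ Sum.inl k := by simp [hjk]
        rw [hvi] at hsub_i
        simp only [VarInfo.Lblock, List.map_cons, List.map_nil] at hsub_i
        rcases hld_i with he | hld
        · refine ⟨by rw [he]; simp, ?_⟩
          intro c hc
          rw [he] at hc
          simp at hc
        · rcases SatLD.classify11 hinj hsub_i hld with h1 | h1
          · have hτi : segTau (VarInfo.one j k) Sum.inl (seg i) = true := by
              rw [h1]
              simp [segTau]
            refine ⟨by rw [h1]; simp, ?_⟩
            intro c hc
            rw [h1] at hc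
            simp at hc
            rw [hτi]
            simp [VarInfo.satisfied, hc]
          · have hτi : segTau (VarInfo.one j k) Sum.inl (seg i) = false := by
              rw [h1]
              simp [segTau, hjk, Ne.symm hjk]
            refine ⟨by rw [h1]; simp, ?_⟩
            intro c hc
            rw [h1] at hc
            simp at hc
            rw [hτi]
            simp [VarInfo.satisfied, hc]
      | two j k lit =>
        have hdist : j ≠ k ∧ j ≠ lit ∧ k ≠ lit := by
          have h := hnodup i
          rw [hvi] at h
          simp [VarInfo.clauses] at h
          tauto
        obtain ⟨hjk, hjl, hkl⟩ := hdist
        have hinjk : (Sum.inl j : Fin m ⊕ Fin (n + 1)) ≠ Sum.inl k := by simp [hjk]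
        have hinjl : (Sum.inl j : Fin m ⊕ Fin (n + 1)) ≠ Sum.inl lit := by simp [hjl]
        have hinkl : (Sum.inl k : Fin m ⊕ Fin (n + 1)) ≠ Sum.inl lit := by simp [hkl]
        rw [hvi] at hsub_i
        simp only [VarInfo.Lblock, List.map_cons, List.map_nil] at hsub_i
        rcases hld_i with he | hld
        · refine ⟨by rw [he]; simp, ?_⟩
          intro c hc
          rw [he] at hc
          simp at hc
        · rcases SatLD.classify21 hinjk hinjl hinkl hsub_i hld with h1 | h1 | h1 | h1
          · have hτi : segTau (VarInfo.two j k lit) Sum.inl (seg i) = true := by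
              rw [h1]
              simp [segTau]
            refine ⟨by rw [h1]; simp, ?_⟩
            intro c hc
            rw [h1] at hc
            simp at hc
            rw [hτi]
            simp [VarInfo.satisfied, hc]
          · have hτi : segTau (VarInfo.two j k lit) Sum.inl (seg i) = true := by
              rw [h1]
              simp [segTau]
            refine ⟨by rw [h1]; simp, ?_⟩
            intro c hc
            rw [h1] at hc
            simp at hc
            rw [hτi]
            simp [VarInfo.satisfied, hc]
          · have hτi : segTau (VarInfo.two j k lit) Sum.inl (seg i) = false := by
              rw [h1]
              simp [segTau, hjl, hkl, Ne.symm hjl, Ne.symm hkl]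
            refine ⟨by rw [h1]; simp, ?_⟩
            intro c hc
            rw [h1] at hc
            simp at hc
            rw [hτi]
            simp [VarInfo.satisfied, hc]
          · have hτi : segTau (VarInfo.two j k lit) Sum.inl (seg i) = true := by
              rw [h1]
              simp [segTau]
            refine ⟨?_, ?_⟩
            · rw [hτi, h1]
              simp [VarInfo.isTwo]
            · intro c hc
              rw [h1] at hc
              simp at hc
              rw [hτi]
              rcases hc with rfl | rfl <;> simp [VarInfo.satisfied]
    refine ⟨fun i => segTau (v i) Sum.inl (seg i), ?_, ?_⟩
    · intro c
      have hc := hfull (Sum.inl c)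
      obtain ⟨idx, hgidx, hsidx, hmem⟩ := SatLD.GS_mem_elim gs ss hc
      have hidxn : idx < n + 1 := by rw [← hsslen]; exact hsidx
      have hcidx : Sum.inl c ∈ ss[idx]'hsidx := by
        rw [hgsget idx hidxn] at hmem
        simpa using hmem
      rcases Nat.lt_or_ge idx n with hin | hge
      · refine ⟨⟨idx, hin⟩, ?_⟩
        refine (hclass ⟨idx, hin⟩).2 c ?_
        rw [hsegeq ⟨idx, hin⟩]
        exact hcidx
      · have hidx_eq : idx = n := by omega
        subst hidx_eq
        rw [hsslast] at hcidx
        simp at hcidx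
    · set seg' : Fin (n + 1) → List (Fin m ⊕ Fin (n + 1)) := fun i => ss.getD i.val []
        with hseg'def
      have hofn : ss = List.ofFn seg' := by
        refine List.ext_getElem (by simp [hsslen]) ?_
        intro idx h1 h2
        rw [List.getElem_ofFn]
        simp only [hseg'def]
        rw [List.getD_eq_getElem]
      have hsum : (ss.map List.length).sum = ∑ i : Fin (n + 1), (seg' i).length := by
        conv_lhs => rw [hofn]
        rw [List.map_ofFn, List.sum_ofFn]
        rfl
      have hlsum : (SatLD.GS gs ss).length = 2 * (n + 1) + (ss.map List.length).sum := by
        rw [SatLD.GS_length gs ss (hgslen.trans hsslen.symm), hsslen]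
      have hsplit : ∑ i : Fin (n + 1), (seg' i).length =
          ∑ i : Fin n, (seg i).length := by
        rw [Fin.sum_univ_castSucc]
        have hlast : seg' (Fin.last n) = [] := by
          rw [hseg'def]
          simp only [Fin.val_last]
          rw [List.getD_eq_getElem _ _ (by rw [hsslen]; omega)]
          exact hsslast
        rw [hlast]
        simp only [List.length_nil, add_zero]
        refine Finset.sum_congr rfl ?_
        intro i _
        rfl
      have hbound : ∑ i : Fin n, (seg i).length ≤
          2 * n + 2 * (Finset.univ.filter fun i : Fin n => (v i).isTwo = true ∧
            segTau (v i) Sum.inl (seg i) = true).card := by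
        calc ∑ i : Fin n, (seg i).length
            ≤ ∑ i : Fin n, (2 + 2 * (if (v i).isTwo = true ∧
                segTau (v i) Sum.inl (seg i) = true then 1 else 0)) :=
              Finset.sum_le_sum (fun i _ => (hclass i).1)
          _ = 2 * n + 2 * (Finset.univ.filter fun i : Fin n => (v i).isTwo = true ∧
                segTau (v i) Sum.inl (seg i) = true).card := by
              rw [Finset.sum_add_distrib, ← Finset.mul_sum, ← Finset.card_filter]
              simp only [Finset.sum_const, Finset.card_univ, Fintype.card_fin, smul_eq_mul,
                mul_one]
              ring
      rw [hlsum, hsum, hsplit] at hlen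
      show K ≤ (Finset.univ.filter fun i : Fin n => (v i).isTwo = true ∧
        segTau (v i) Sum.inl (seg i) = true).card
      omega

  · rintro ⟨τ, hsat, hK⟩
    set ss : List (List (Fin m ⊕ Fin (n + 1))) :=
      ((List.finRange n).map fun i => segChoice Sum.inl (v i) (τ i)) ++ [[]] with hss
    have hsslen : ss.length = n + 1 := by simp [hss]
    have hssget : ∀ (i : ℕ) (hi : i < n),
        ss[i]'(by rw [hsslen]; omega) = segChoice Sum.inl (v ⟨i, hi⟩) (τ ⟨i, hi⟩) := by
      intro i hi
      rw [List.getElem_of_eq hss]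
      rw [List.getElem_append_left (by simpa using hi)]
      simp
    refine ⟨SatLD.GS gs ss, ⟨?_, ?_⟩, ?_, ?_⟩
    · rw [hS]
      refine SatLD.GS_sublist gs ?_
      rw [hss, hLs]
      exact SatLD.forall2_aux _ _ (fun i => SatLD.segChoice_sublist _ _ _)
        (List.nil_sublist _) _
    · rw [SatLD.isLD_iff]
      refine SatLD.GS_LD gs ss (hgslen.trans hsslen.symm)
        (by intro h; rw [h] at hgslen; simp at hgslen)
        (List.Pairwise.isChain hgsnd) ?_ ?_
      · intro s hs a ha hags
        rw [hss] at hs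
        rcases List.mem_append.mp hs with h | h
        · rcases List.mem_map.mp h with ⟨i, -, rfl⟩
          obtain ⟨c, rfl⟩ := SatLD.segChoice_mem ha
          rcases List.mem_map.mp hags with ⟨b, -, hb⟩
          simp at hb
        · simp at h
          subst h
          simp at ha
      · intro s hs
        rw [hss] at hs
        rcases List.mem_append.mp hs with h | h
        · rcases List.mem_map.mp h with ⟨i, -, rfl⟩
          exact Or.inr (SatLD.segChoice_LD _ _ (hnodup i) _ (fun a b h => Sum.inl.inj h))
        · simp at h
          exact Or.inl h
    · intro a
      cases a with
      | inr b =>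
        refine SatLD.GS_mem_intro gs ss b.val (by rw [hgslen]; exact b.isLt)
          (by rw [hsslen]; exact b.isLt) ?_
        rw [hgsget b.val b.isLt]
        simp
      | inl c =>
        obtain ⟨i, hsi⟩ := hsat c
        refine SatLD.GS_mem_intro gs ss i.val (by rw [hgslen]; omega)
          (by rw [hsslen]; omega) ?_
        have hget := hssget i.val i.isLt
        simp only [Fin.eta] at hget
        have hmem : Sum.inl c ∈ segChoice (Sum.inl : Fin m → Fin m ⊕ Fin (n + 1)) (v i) (τ i) := by
          cases hvi : v i with
          | one j k =>
            rw [hvi] at hsi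
            rcases hsi with ⟨rfl, hb⟩ | ⟨rfl, hb⟩ <;> simp [segChoice, hb]
          | two j k l =>
            rw [hvi] at hsi
            rcases hsi with ⟨hc, hb⟩ | ⟨rfl, hb⟩
            · rcases hc with rfl | rfl <;> simp [segChoice, hb]
            · simp [segChoice, hb]
        rw [hget]
        exact List.mem_cons_of_mem _ (List.mem_cons_of_mem _ hmem)
    · have hlen1 := SatLD.GS_length gs ss (hgslen.trans hsslen.symm)
      rw [hlen1, hsslen]
      have hmapsum : (ss.map List.length).sum =
          ∑ i : Fin n, (segChoice (Sum.inl : Fin m → Fin m ⊕ Fin (n + 1)) (v i) (τ i)).length := by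
        rw [hss]
        rw [List.map_append, List.sum_append, List.map_map]
        simp only [List.map_cons, List.map_nil, List.sum_cons, List.sum_nil]
        rw [← List.ofFn_eq_map, List.sum_ofFn]
        simp [Function.comp]
      rw [hmapsum]
      have hterm : ∀ i : Fin n, (segChoice (Sum.inl : Fin m → Fin m ⊕ Fin (n + 1)) (v i) (τ i)).length =
          2 + 2 * (if (v i).isTwo = true ∧ τ i = true then 1 else 0) := by
        intro i
        exact SatLD.segChoice_length _ _ _
      rw [Finset.sum_congr rfl (fun i _ => hterm i)]
      rw [Finset.sum_add_distrib, ← Finset.mul_sum]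
      rw [← Finset.card_filter]
      simp only [Finset.sum_const, Finset.card_univ, Fintype.card_fin, smul_eq_mul, mul_one]
      omega
end

section
/- Let S be a string over an alphabet Σ₀, let M ≥ 2, and let 1, 2, …, M be M new letters not in Σ₀. Define S* = 1·2·⋯·M·S·M·(M−1)·⋯·2·1 over the alphabet Σ₀ ∪ {1,…,M}. Then every LD-subsequence of S* that contains at least one of the letters 1, …, M has length at most 2. -/
private lemma core_lemma {α : Type*} [DecidableEq α] {A B C : List α} {x b : α}
    (hbx : b ≠ x) (hAx : A.count x ≤ 1) (hAb : A.count b ≤ 1) (hB : x ∉ B)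
    (hCx : C.count x ≤ 1) : ¬ [b, b, x, x].Sublist (A ++ B ++ C) := by
  intro h
  rw [List.append_assoc, List.sublist_append_iff] at h
  obtain ⟨u, w, huw, hu, hw⟩ := h
  have hwx : w.count x ≤ 1 := by
    have h1 := hw.count_le x
    rw [List.count_append, List.count_eq_zero_of_not_mem hB] at h1
    omega
  have hux : u.count x ≤ 1 := le_trans (hu.count_le x) hAx
  have htot : u.count x + w.count x = 2 := by
    have h2 := congrArg (List.count x) huw
    rw [List.count_append] at h2
    simp [List.count_cons, Ne.symm hbx] at h2
    omega
  have hueq : u = [b, b, x] := by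
    rcases u with _ | ⟨a1, _ | ⟨a2, _ | ⟨a3, _ | ⟨a4, u⟩⟩⟩⟩ <;>
      simp only [List.cons_append, List.nil_append, List.cons.injEq] at huw
    · subst huw; simp [List.count_cons, Ne.symm hbx, hbx] at hwx
    · obtain ⟨rfl, rfl⟩ := huw
      simp [List.count_cons, Ne.symm hbx, hbx] at hwx
    · obtain ⟨rfl, rfl, rfl⟩ := huw
      simp [List.count_cons] at hwx
    · obtain ⟨rfl, rfl, rfl, rfl⟩ := huw
      rfl
    · obtain ⟨rfl, rfl, rfl, rfl, h5⟩ := huw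
      simp [List.count_cons, hbx] at hux
  have hub : u.count b ≤ 1 := le_trans (hu.count_le b) hAb
  rw [hueq] at hub
  simp [List.count_cons, hbx] at hub

private lemma core_lemma' {α : Type*} [DecidableEq α] {A B C : List α} {x b : α}
    (hbx : b ≠ x) (hAx : A.count x ≤ 1) (hB : x ∉ B)
    (hCx : C.count x ≤ 1) (hCb : C.count b ≤ 1) :
    ¬ [x, x, b, b].Sublist (A ++ B ++ C) := by
  intro h
  have h2 := h.reverse
  simp only [List.reverse_append] at h2
  have h3 : [b, b, x, x].Sublist (C.reverse ++ B.reverse ++ A.reverse) := by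
    simpa [List.append_assoc] using h2
  exact core_lemma hbx (by simpa using hCx) (by simpa using hCb)
    (by simpa using hB) (by simpa using hAx) h3

/-- Padding construction: if `p 0, …, p (M−1)` are `M ≥ 2` distinct new letters not
occurring in `S`, and `S* = p 0 ⋯ p (M−1) · S · p (M−1) ⋯ p 0`, then every
LD-subsequence of `S*` containing at least one of the new letters has length at most 2. -/
theorem stmt_12 {α : Type*} (S : List α) (M : ℕ) (hM : 2 ≤ M)
    (p : Fin M → α) (hinj : Function.Injective p) (hnew : ∀ i : Fin M, p i ∉ S) :
    ∀ l : List α, IsLDSubseq l (List.ofFn p ++ S ++ (List.ofFn p).reverse) →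
      (∃ i : Fin M, p i ∈ l) → l.length ≤ 2 := by
  classical
  rintro l ⟨hsub, bs, hne, hexp, hchain, hflat⟩ ⟨i, hil⟩
  set x := p i with hx
  set P := List.ofFn p with hP
  set F : List (α × ℕ) → List α :=
    fun L => (L.map fun q => List.replicate q.2 q.1).flatten with hF
  have hFapp : ∀ a b : List (α × ℕ), F (a ++ b) = F a ++ F b := by
    intro a b; simp [hF]
  have hFcons : ∀ (c : α × ℕ) (t : List (α × ℕ)),
      F (c :: t) = List.replicate c.2 c.1 ++ F t := by
    intro c t; simp [hF]
  have hPnd : P.Nodup := List.nodup_ofFn.mpr hinj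
  have hPle : ∀ a : α, P.count a ≤ 1 := List.nodup_iff_count_le_one.mp hPnd
  have hPx : P.count x = 1 :=
    List.count_eq_one_of_mem hPnd (by simp [hP, List.mem_ofFn]; exact ⟨i, rfl⟩)
  have hSx : x ∉ S := hnew i
  have hcl : l.count x ≤ 2 := by
    have h1 := hsub.count_le x
    simp [List.count_append, hPx, List.count_eq_zero_of_not_mem hSx] at h1
    omega
  -- find the block containing x
  obtain ⟨t, ht, hxt⟩ := List.mem_flatten.mp (hflat ▸ hil)
  obtain ⟨blk, hblk, rfl⟩ := List.mem_map.mp ht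
  have hblkx : blk.1 = x := (List.eq_of_mem_replicate hxt).symm
  obtain ⟨bs₁, bs₂, rfl⟩ := List.append_of_mem hblk
  have hblk2 : 2 ≤ blk.2 := hexp blk hblk
  have hrep : [x, x].Sublist (List.replicate blk.2 blk.1) := by
    rw [hblkx]
    exact (List.replicate_sublist_replicate x).mpr hblk2
  -- bs₂ must be empty
  have h2 : bs₂ = [] := by
    rcases bs₂ with _ | ⟨q, rest⟩
    · rfl
    exfalso
    have hq2 : 2 ≤ q.2 := hexp q (by simp)
    have hrepq : [q.1, q.1].Sublist (List.replicate q.2 q.1) :=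
      (List.replicate_sublist_replicate q.1).mpr hq2
    have hleq : l = F bs₁ ++ ((List.replicate blk.2 blk.1 ++ List.replicate q.2 q.1)
        ++ F rest) := by
      rw [hflat]
      show F (bs₁ ++ blk :: q :: rest) = _
      rw [hFapp, hFcons, hFcons, List.append_assoc]
    have hc : ([x, x] ++ [q.1, q.1]).Sublist l := by
      rw [hleq]
      exact ((hrep.append hrepq).trans (List.sublist_append_left _ _)).trans
        (List.sublist_append_right _ _)
    by_cases hqx : q.1 = x
    · have := hc.count_le x
      rw [hqx] at this
      simp [List.count_cons] at this
      omega
    · exact core_lemma' hqx (le_of_eq hPx) hSx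
        (by simpa using hPle x) (by simpa using hPle q.1) (hc.trans hsub)
  -- bs₁ must be empty
  have h1 : bs₁ = [] := by
    rcases List.eq_nil_or_concat bs₁ with h | ⟨s1, q, rfl⟩
    · exact h
    exfalso
    have hq2 : 2 ≤ q.2 := hexp q (by simp)
    have hrepq : [q.1, q.1].Sublist (List.replicate q.2 q.1) :=
      (List.replicate_sublist_replicate q.1).mpr hq2
    have hleq : l = F s1 ++ ((List.replicate q.2 q.1 ++ List.replicate blk.2 blk.1)
        ++ F bs₂) := by
      rw [hflat]
      show F (s1.concat q ++ blk :: bs₂) = _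
      rw [List.concat_eq_append, List.append_assoc, List.singleton_append,
        hFapp, hFcons, hFcons, List.append_assoc]
    have hc : ([q.1, q.1] ++ [x, x]).Sublist l := by
      rw [hleq]
      exact ((hrepq.append hrep).trans (List.sublist_append_left _ _)).trans
        (List.sublist_append_right _ _)
    by_cases hqx : q.1 = x
    · have := hc.count_le x
      rw [hqx] at this
      simp [List.count_cons] at this
      omega
    · exact core_lemma hqx (le_of_eq hPx) (by simpa using hPle q.1) hSx
        (by simpa using hPle x) (hc.trans hsub)
  subst h1 h2
  rw [hflat]
  show (F [blk]).length ≤ 2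
  have : blk.2 ≤ 2 := by
    have hcnt : l.count x = blk.2 := by
      rw [hflat]
      show (F [blk]).count x = blk.2
      simp [hF, hblkx]
    omega
  simp [hF]
  omega
end

section
/- Let S be a string of length n over a finite alphabet Σ, indexed S[1..n]. Define L : {0,1,…,n} → ℕ by L(0) = 0, L(1) = 0, and for i ≥ 2: if there is no x ∈ (0, i−1] with S[i−x] = S[i] then L(i) = L(i−1); otherwise, with x = min{x | S[i−x] = S[i], 0 < x ≤ i−1}, L(i) = max{ L(i−x−1) + 2, L(i−x) + 1, L(i−1) }. Then L(n) equals the maximum length of an LD-subsequence of S (and 0 if S has no LD-subsequence). -/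
namespace LLDS
variable {α : Type*}

lemma mem_of_getLast?_eq {l : List α} {a : α} (h : l.getLast? = some a) : a ∈ l := by
  cases l with
  | nil => simp at h
  | cons x xs =>
    rw [List.getLast?_eq_getLast (l := x :: xs) (by simp)] at h
    exact (Option.some_injective _ h) ▸ List.getLast_mem _

lemma chain'_ne_congr {bs cs : List (α × ℕ)} (h : bs.map Prod.fst = cs.map Prod.fst)
    (hch : List.Chain' (fun p q => p.1 ≠ q.1) bs) :
    List.Chain' (fun p q => p.1 ≠ q.1) cs := by
  have h1 : List.Chain' Ne (bs.map Prod.fst) := (List.isChain_map Prod.fst).mpr hch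
  rw [h] at h1
  exact (List.isChain_map Prod.fst).mp h1

lemma ld_length_ge_two {l : List α} (h : IsLDString l) : 2 ≤ l.length := by
  obtain ⟨bs, hne, hd, _, rfl⟩ := h
  obtain ⟨bs', p, rfl⟩ := bs.eq_nil_or_concat.resolve_left hne
  have h2 : 2 ≤ p.2 := hd p (by simp)
  simp only [List.concat_eq_append, List.map_append, List.flatten_append, List.length_append,
    List.map_cons, List.map_nil, List.flatten_cons, List.flatten_nil, List.append_nil,
    List.length_replicate]
  omega

lemma exists_last_block {l : List α} (h : IsLDString l) :
    ∃ (l' : List α) (a : α) (d : ℕ), 2 ≤ d ∧ l = l' ++ List.replicate d a ∧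
      (l' = [] ∨ IsLDString l') ∧ (2 ≤ d - 1 → IsLDString (l' ++ List.replicate (d-1) a)) := by
  obtain ⟨bs, hne, hd, hch, rfl⟩ := h
  obtain ⟨bs', p, rfl⟩ := bs.eq_nil_or_concat.resolve_left hne
  refine ⟨(bs'.map fun p => List.replicate p.2 p.1).flatten, p.1, p.2, hd p (by simp), by simp,
    ?_, ?_⟩
  · rcases eq_or_ne bs' [] with rfl | hne'
    · left; simp
    · right
      refine ⟨bs', hne', fun q hq => hd q (by simp [hq]), ?_, rfl⟩
      exact (List.isChain_append.mp (by simpa [List.Chain'] using hch)).1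
  · intro h2
    refine ⟨bs' ++ [(p.1, p.2 - 1)], by simp, ?_, ?_, ?_⟩
    · intro q hq
      rcases List.mem_append.mp hq with h | h
      · exact hd q (by simp [h])
      · simp at h; subst h; simpa using h2
    · exact chain'_ne_congr (bs := bs'.concat p) (by simp) hch
    · simp

lemma ld_append_pair {l : List α} (h : l = [] ∨ IsLDString l) (a : α) :
    IsLDString (l ++ [a, a]) := by
  rcases h with rfl | h
  · exact ⟨[(a, 2)], by simp, by simp, List.isChain_singleton _, by simp⟩
  · obtain ⟨bs, hne, hd, hch, rfl⟩ := h
    obtain ⟨bs', p, rfl⟩ := bs.eq_nil_or_concat.resolve_left hne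
    have hp2 : 2 ≤ p.2 := hd p (by simp)
    rcases eq_or_ne p.1 a with rfl | hpa
    · refine ⟨bs' ++ [(p.1, p.2 + 2)], by simp, ?_, ?_, ?_⟩
      · intro q hq
        rcases List.mem_append.mp hq with h | h
        · exact hd q (by simp [h])
        · simp at h; subst h; simp
      · exact chain'_ne_congr (bs := bs'.concat p) (by simp) hch
      · simp [List.replicate_add]
    · refine ⟨bs' ++ [p] ++ [(a, 2)], by simp, ?_, ?_, ?_⟩
      · intro q hq
        rcases List.mem_append.mp hq with h | h
        · exact hd q (by simpa using h)
        · simp at h; subst h; simp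
      · rw [List.Chain', List.isChain_append]
        refine ⟨by simpa [List.Chain'] using hch, by simp, ?_⟩
        intro x hx y hy
        simp at hx hy
        subst hx; subst hy; exact hpa
      · simp [List.replicate_add]

lemma ld_extend_one {l : List α} (h : IsLDString l) {a : α} (hlast : l.getLast? = some a) :
    IsLDString (l ++ [a]) := by
  obtain ⟨bs, hne, hd, hch, rfl⟩ := h
  obtain ⟨bs', p, rfl⟩ := bs.eq_nil_or_concat.resolve_left hne
  have h2 : 2 ≤ p.2 := hd p (by simp)
  have hl : (((bs'.concat p).map fun p => List.replicate p.2 p.1).flatten) =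
      (bs'.map fun p => List.replicate p.2 p.1).flatten ++ List.replicate p.2 p.1 := by simp
  have hrep : List.replicate p.2 p.1 = List.replicate (p.2 - 1) p.1 ++ [p.1] := by
    have h3 := List.replicate_succ' (n := p.2 - 1) (a := p.1)
    rwa [show p.2 - 1 + 1 = p.2 by omega] at h3
  have hlast' : p.1 = a := by
    rw [hl, hrep, ← List.append_assoc, List.getLast?_concat] at hlast
    exact Option.some_injective _ hlast
  subst hlast'
  refine ⟨bs' ++ [(p.1, p.2 + 1)], by simp, ?_, ?_, ?_⟩
  · intro q hq
    rcases List.mem_append.mp hq with h | h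
    · exact hd q (by simp [h])
    · simp at h; subst h; simp; omega
  · exact chain'_ne_congr (bs := bs'.concat p) (by simp) hch
  · simp [List.replicate_add]

lemma sublist_concat_concat {t A : List α} {a b : α} (h : (t ++ [a]).Sublist (A ++ [b])) :
    t.Sublist A := by
  obtain ⟨t₁, t₂, heq, h1, h2⟩ := List.sublist_append_iff.mp h
  rcases List.sublist_singleton.mp h2 with rfl | rfl
  · rw [List.append_nil] at heq
    exact (List.sublist_append_left t [a]).trans (heq ▸ h1)
  · have ht : t = t₁ := (List.append_inj' heq rfl).1
    exact ht ▸ h1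

lemma sublist_avoid {m A Q : List α} {c : α} (h : m.Sublist (A ++ Q))
    (hlast : m.getLast? = some c) (hQ : ∀ y ∈ Q, y ≠ c) : m.Sublist A := by
  obtain ⟨m₁, m₂, rfl, h1, h2⟩ := List.sublist_append_iff.mp h
  rcases eq_or_ne m₂ [] with rfl | hne
  · simpa using h1
  · exfalso
    rw [List.getLast?_append_of_ne_nil m₁ hne] at hlast
    exact hQ c (h2.subset (mem_of_getLast?_eq hlast)) rfl

lemma last_block_of_concat {l₁ : List α} {c : α} (h : IsLDString (l₁ ++ [c])) :
    ∃ (l' : List α) (d : ℕ), 2 ≤ d ∧ l₁ = l' ++ List.replicate (d-1) c ∧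
      (l' = [] ∨ IsLDString l') ∧ (2 ≤ d - 1 → IsLDString l₁) ∧
      l₁.getLast? = some c := by
  obtain ⟨l', a, d, hd2, heq, h1, h2⟩ := exists_last_block h
  have hrep : List.replicate d a = List.replicate (d-1) a ++ [a] := by
    have h3 := List.replicate_succ' (n := d - 1) (a := a)
    rwa [show d - 1 + 1 = d by omega] at h3
  have heq2 : l₁ ++ [c] = (l' ++ List.replicate (d-1) a) ++ [a] := by
    rw [heq, hrep, List.append_assoc]
  have hac : a = c := by
    have h4 := (List.append_inj' heq2 rfl).2
    simpa using h4.symm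
  subst hac
  have hl1 : l₁ = l' ++ List.replicate (d-1) a := (List.append_inj' heq2 rfl).1
  have hlast : l₁.getLast? = some a := by
    rw [hl1]
    have hrep2 : List.replicate (d-1) a = List.replicate (d-2) a ++ [a] := by
      have h3 := List.replicate_succ' (n := d - 2) (a := a)
      rwa [show d - 2 + 1 = d - 1 by omega] at h3
    rw [hrep2, ← List.append_assoc, List.getLast?_concat]
  exact ⟨l', d, hd2, hl1, h1, fun hge => hl1 ▸ h2 hge, hlast⟩

def Pref (s : ℕ → α) (i : ℕ) : List α := (List.range i).map fun t => s (t + 1)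

lemma Pref_succ (s : ℕ → α) (k : ℕ) : Pref s (k+1) = Pref s k ++ [s (k+1)] := by
  simp [Pref, List.range_succ]

lemma Pref_mono (s : ℕ → α) {j i : ℕ} (h : j ≤ i) : (Pref s j).Sublist (Pref s i) :=
  (List.range_sublist.mpr h).map _

lemma Pref_add (s : ℕ → α) (j m : ℕ) :
    Pref s (j+m) = Pref s j ++ (List.range m).map (fun t => s (j+t+1)) := by
  simp [Pref, List.range_add, List.map_map, Function.comp]

lemma Pref_length (s : ℕ → α) (i : ℕ) : (Pref s i).length = i := by simp [Pref]

lemma main (n : ℕ) (s : ℕ → α) (L : ℕ → ℕ)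
    (hL0 : L 0 = 0) (hL1 : 1 ≤ n → L 1 = 0)
    (hrecNone : ∀ i : ℕ, 2 ≤ i → i ≤ n →
      (∀ x : ℕ, 0 < x → x ≤ i - 1 → s (i - x) ≠ s i) → L i = L (i - 1))
    (hrecMin : ∀ i : ℕ, 2 ≤ i → i ≤ n → ∀ x : ℕ, 0 < x → x ≤ i - 1 → s (i - x) = s i →
      (∀ x' : ℕ, 0 < x' → x' < x → s (i - x') ≠ s i) →
      L i = max (L (i - x - 1) + 2) (max (L (i - x) + 1) (L (i - 1)))) :
    ∀ i, i ≤ n →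
      (∀ l : List α, l.Sublist (Pref s i) → IsLDString l → l.length ≤ L i) ∧
      (∃ l : List α, l.Sublist (Pref s i) ∧ (l = [] ∨ IsLDString l) ∧ l.length = L i) := by
  intro i
  induction i using Nat.strong_induction_on with
  | _ i IH =>
  intro hin
  rcases Nat.lt_or_ge i 2 with hi2 | hi2
  · have hLi0 : L i = 0 := by interval_cases i; exacts [hL0, hL1 (by omega)]
    constructor
    · intro l hs hld
      have h2 := ld_length_ge_two hld
      have h3 := hs.length_le
      rw [Pref_length] at h3
      omega
    · exact ⟨[], List.nil_sublist _, Or.inl rfl, by simp [hLi0]⟩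
  · have hP : Pref s i = Pref s (i-1) ++ [s i] := by
      have h := Pref_succ s (i-1)
      rwa [show i - 1 + 1 = i by omega] at h
    by_cases hex : ∃ x, 0 < x ∧ x ≤ i - 1 ∧ s (i - x) = s i
    case neg =>
      push_neg at hex
      have hLi : L i = L (i-1) := hrecNone i hi2 hin (fun x hx hxi => hex x hx hxi)
      obtain ⟨UB1, ACH1⟩ := IH (i-1) (by omega) (by omega)
      have hnotin : s i ∉ Pref s (i-1) := by
        intro hmem
        simp only [Pref, List.mem_map, List.mem_range] at hmem
        obtain ⟨t, ht, hts⟩ := hmem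
        exact hex (i - (t+1)) (by omega) (by omega)
          (by rw [show i - (i - (t+1)) = t + 1 by omega]; exact hts)
      constructor
      · intro l hs hld
        rw [hP] at hs
        obtain ⟨l₁, l₂, rfl, h1, h2⟩ := List.sublist_append_iff.mp hs
        rcases List.sublist_singleton.mp h2 with rfl | rfl
        · have := UB1 l₁ h1 (by simpa using hld)
          simp only [List.append_nil]
          omega
        · exfalso
          obtain ⟨l', d, hd2, hl1, _, _, hlast⟩ := last_block_of_concat hld
          exact hnotin (h1.subset (mem_of_getLast?_eq hlast))
      · obtain ⟨l, hsu, hor, hlen⟩ := ACH1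
        exact ⟨l, hsu.trans (Pref_mono s (by omega)), hor, by omega⟩
    case pos =>
      classical
      obtain ⟨x, hx0, hxle, hxeq, hmin⟩ : ∃ x, 0 < x ∧ x ≤ i - 1 ∧ s (i - x) = s i ∧
          ∀ x' : ℕ, 0 < x' → x' < x → s (i - x') ≠ s i := by
        obtain ⟨h1, h2, h3⟩ := Nat.find_spec hex
        exact ⟨Nat.find hex, h1, h2, h3, fun x' hx1 hx2 heq =>
          Nat.find_min hex hx2 ⟨hx1, by omega, heq⟩⟩
      have hLi := hrecMin i hi2 hin x hx0 hxle hxeq hmin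
      obtain ⟨j, hj⟩ : ∃ j, i - x = j := ⟨_, rfl⟩
      rw [hj] at hLi hxeq
      have hj1 : 1 ≤ j := by omega
      have hjle : j ≤ i - 1 := by omega
      have hj1' : j - 1 < i ∧ j - 1 ≤ n ∧ j < i ∧ j ≤ n ∧ i - 1 < i ∧ i - 1 ≤ n := by omega
      obtain ⟨UB1, ACH1⟩ := IH (i-1) hj1'.2.2.2.2.1 hj1'.2.2.2.2.2
      obtain ⟨UBj, ACHj⟩ := IH j hj1'.2.2.1 hj1'.2.2.2.1
      obtain ⟨UBj1, ACHj1⟩ := IH (j-1) hj1'.1 hj1'.2.1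
      have hPj : Pref s j = Pref s (j-1) ++ [s j] := by
        have h := Pref_succ s (j-1)
        rwa [show j - 1 + 1 = j by omega] at h
      have hsplit : Pref s (i-1) = Pref s j ++ (List.range (i-1-j)).map (fun t => s (j+t+1)) := by
        have h := Pref_add s j (i-1-j)
        rwa [show j + (i-1-j) = i - 1 by omega] at h
      have hQ : ∀ y ∈ (List.range (i-1-j)).map (fun t => s (j+t+1)), y ≠ s i := by
        intro y hy
        simp only [List.mem_map, List.mem_range] at hy
        obtain ⟨t, ht, rfl⟩ := hy
        intro heq
        exact hmin (i - (j+t+1)) (by omega) (by omega)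
          (by rw [show i - (i - (j+t+1)) = j+t+1 by omega]; exact heq)
      constructor
      · intro l hs hld
        rw [hP] at hs
        obtain ⟨l₁, l₂, rfl, h1, h2⟩ := List.sublist_append_iff.mp hs
        rcases List.sublist_singleton.mp h2 with rfl | rfl
        · have := UB1 l₁ h1 (by simpa using hld)
          simp only [List.append_nil]
          omega
        · obtain ⟨l', d, hd2, hl1, hl', hld1, hlast⟩ := last_block_of_concat hld
          have hm : l₁.Sublist (Pref s j) := by
            rw [hsplit] at h1
            exact sublist_avoid h1 hlast hQ
          by_cases hd3 : 2 ≤ d - 1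
          · have hub := UBj l₁ hm (hld1 hd3)
            have hlen : (l₁ ++ [s i]).length = l₁.length + 1 := by simp
            omega
          · have hd' : d = 2 := by omega
            have hl1' : l₁ = l' ++ [s i] := by rw [hl1, hd']; simp
            have hsub' : l'.Sublist (Pref s (j-1)) := by
              apply sublist_concat_concat (a := s i) (b := s j)
              rw [← hPj, ← hl1']
              exact hm
            rcases hl' with rfl | hld'
            · have hlen2 : (l₁ ++ [s i]).length = 2 := by rw [hl1']; simp
              omega
            · have hub := UBj1 l' hsub' hld'
              have hlen2 : (l₁ ++ [s i]).length = l'.length + 2 := by rw [hl1']; simp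
              omega
      · rcases le_or_gt (L j + 1) (max (L (j-1) + 2) (L (i-1))) with hB | hB
        · rcases le_or_gt (L (i-1)) (L (j-1) + 2) with hC | hC
          · -- L i = L (j-1) + 2, construction a
            obtain ⟨l', hsub', hor, hlen'⟩ := ACHj1
            refine ⟨l' ++ [s i, s i], ?_, Or.inr (ld_append_pair hor (s i)), ?_⟩
            · have heq : l' ++ [s i, s i] = (l' ++ [s j]) ++ [s i] := by
                rw [hxeq]; simp
              rw [heq, hP]
              apply List.Sublist.append _ (List.Sublist.refl _)
              have h1 : (l' ++ [s j]).Sublist (Pref s j) := by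
                rw [hPj]; exact List.Sublist.append hsub' (List.Sublist.refl _)
              exact h1.trans (Pref_mono s (by omega))
            · simp only [List.length_append, List.length_cons, List.length_nil, hlen']
              omega
          · -- L i = L (i-1)
            obtain ⟨l, hsu, hor, hlen⟩ := ACH1
            exact ⟨l, hsu.trans (Pref_mono s (by omega)), hor, by omega⟩
        · -- L i = L j + 1
          have hLj2 : 2 ≤ L j := by omega
          obtain ⟨l', hsub', hor', hlen'⟩ := ACHj
          have hld' : IsLDString l' := by
            rcases hor' with rfl | h
            · simp at hlen'; omega
            · exact h
          · have hnot : ¬ l'.Sublist (Pref s (j-1)) := by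
              intro hcon
              have := UBj1 l' hcon hld'
              omega
            rw [hPj] at hsub'
            obtain ⟨m₁, m₂, rfl, hm1, hm2⟩ := List.sublist_append_iff.mp hsub'
            rcases List.sublist_singleton.mp hm2 with rfl | rfl
            · exact absurd (by simpa using hm1) hnot
            · have hlast : (m₁ ++ [s j]).getLast? = some (s j) := List.getLast?_concat
              have hldext : IsLDString ((m₁ ++ [s j]) ++ [s i]) := by
                rw [← hxeq]
                exact ld_extend_one hld' hlast
              refine ⟨(m₁ ++ [s j]) ++ [s i], ?_, Or.inr hldext, ?_⟩
              · rw [hP]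
                apply List.Sublist.append _ (List.Sublist.refl _)
                have h1 : (m₁ ++ [s j]).Sublist (Pref s j) := by
                  rw [hPj]; exact List.Sublist.append hm1 (List.Sublist.refl _)
                exact h1.trans (Pref_mono s (by omega))
              · simp only [List.length_append, List.length_cons, List.length_nil] at hlen' ⊢
                omega

end LLDS

/-- Correctness of the linear-time DP for LLDS. The string is `S[1..n]` with `S[i] = s i`;
`L` satisfies the recurrence `L(0) = L(1) = 0`; for `2 ≤ i ≤ n`, if no `x ∈ (0, i−1]` has
`S[i−x] = S[i]` then `L(i) = L(i−1)`, and otherwise, for the minimal such `x`,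
`L(i) = max (L(i−x−1) + 2) (max (L(i−x) + 1) (L(i−1)))`. Then `L(n)` is the maximum length
of an LD-subsequence of `S` (and `0` if `S` has no LD-subsequence). -/
theorem stmt_13 {α : Type*} (n : ℕ) (s : ℕ → α) (L : ℕ → ℕ)
    (hL0 : L 0 = 0) (hL1 : 1 ≤ n → L 1 = 0)
    (hrecNone : ∀ i : ℕ, 2 ≤ i → i ≤ n →
      (∀ x : ℕ, 0 < x → x ≤ i - 1 → s (i - x) ≠ s i) → L i = L (i - 1))
    (hrecMin : ∀ i : ℕ, 2 ≤ i → i ≤ n → ∀ x : ℕ, 0 < x → x ≤ i - 1 → s (i - x) = s i →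
      (∀ x' : ℕ, 0 < x' → x' < x → s (i - x') ≠ s i) →
      L i = max (L (i - x - 1) + 2) (max (L (i - x) + 1) (L (i - 1)))) :
    IsGreatest
      ({0} ∪ {k : ℕ | ∃ l : List α,
        IsLDSubseq l ((List.range n).map fun t => s (t + 1)) ∧ l.length = k})
      (L n) := by
  obtain ⟨UB, ACH⟩ := LLDS.main n s L hL0 hL1 hrecNone hrecMin n le_rfl
  constructor
  · obtain ⟨l, hsu, hor, hlen⟩ := ACH
    rcases hor with rfl | hld
    · exact Set.mem_union_left _ (by simp at hlen ⊢; omega)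
    · exact Set.mem_union_right _ ⟨l, ⟨hsu, hld⟩, hlen⟩
  · intro k hk
    rcases hk with h0 | ⟨l, ⟨hsu, hld⟩, hlen⟩
    · simp at h0; omega
    · exact hlen ▸ UB l hsu hld
end

section
/- Let S be a string of length n over a finite alphabet Σ, indexed S[1..n], and for each x ∈ Σ and each ℓ ≥ 2 let w_x(ℓ) > 0 be a given weight (arbitrary positive, not necessarily monotone in ℓ). For 1 ≤ i ≤ j ≤ n, let N(i,j) be the number of occurrences of the letter S[j] in S[i..j], and define w[i,j] = max{ w_{S[j]}(ℓ) : 2 ≤ ℓ ≤ N(i,j) } if N(i,j) ≥ 2, and w[i,j] = 0 otherwise. Define T(0) = 0 and, for 1 ≤ i ≤ n, T(i) = max over all y with 0 ≤ y < i, (y = 0 or S[y] ≠ S[i]), and w[y+1, i] > 0, of T(y) + w[y+1, i] (and T(i) = 0 if no such y exists). Then max_{0 ≤ i ≤ n} T(i) equals the maximum total weight of an LD-subsequence of S, where the weight of an LD-subsequence x₁^{d₁} x₂^{d₂} ⋯ x_k^{d_k} is Σ_{i=1}^{k} w_{x_i}(d_i) (and the maximum is 0 if S has no LD-subsequence). 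-/
private lemma lastOcc {α : Type*} [DecidableEq α] (x : α) (L : List α) (hx : x ∈ L) :
    ∃ k, ∃ hk : k < L.length, L[k] = x ∧ (L.drop (k+1)).count x = 0 := by
  induction L using List.reverseRecOn with
  | nil => simp at hx
  | append_singleton M a IH =>
    by_cases hax : a = x
    · refine ⟨M.length, by simp, ?_, ?_⟩
      · rw [List.getElem_concat_length (l := M) (a := a) (i := M.length) rfl (by simp)]; exact hax
      · rw [List.drop_eq_nil_of_le (by simp)]; simp
    · have hxM : x ∈ M := by
        rcases List.mem_append.mp hx with h | h
        · exact h
        · simp at h; exact absurd h.symm hax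
      obtain ⟨k, hk, hget, hcnt⟩ := IH hxM
      refine ⟨k, by simp; omega, ?_, ?_⟩
      · rw [List.getElem_append_left]; exact hget
      · rw [List.drop_append_of_le_length (by omega)]
        simp [List.count_append, hcnt, List.count_singleton, hax]

private lemma coreStep {α : Type*} [DecidableEq α] (n : ℕ) (s : ℕ → α)
    (w : α → ℕ → ℝ) (hw : ∀ (x : α) (ℓ : ℕ), 2 ≤ ℓ → 0 < w x ℓ)
    (N : ℕ → ℕ → ℕ) (W : ℕ → ℕ → ℝ) (T : ℕ → ℝ)
    (hN : ∀ i j : ℕ, 1 ≤ i → i ≤ j → j ≤ n →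
      N i j = (((((List.range n).map fun t => s (t + 1)).drop (i - 1)).take (j - i + 1)).count (s j)))
    (hWpos : ∀ i j : ℕ, 1 ≤ i → i ≤ j → j ≤ n → 2 ≤ N i j →
      IsGreatest {r : ℝ | ∃ ℓ : ℕ, 2 ≤ ℓ ∧ ℓ ≤ N i j ∧ r = w (s j) ℓ} (W i j))
    (hTmax : ∀ i : ℕ, 1 ≤ i → i ≤ n →
      {r : ℝ | ∃ y : ℕ, y < i ∧ (y = 0 ∨ s y ≠ s i) ∧ 0 < W (y + 1) i ∧
          r = T y + W (y + 1) i}.Nonempty →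
      IsGreatest {r : ℝ | ∃ y : ℕ, y < i ∧ (y = 0 ∨ s y ≠ s i) ∧ 0 < W (y + 1) i ∧
          r = T y + W (y + 1) i} (T i))
    (x : α) (d : ℕ) (hd : 2 ≤ d) (m y₀ y' : ℕ) (hm : m ≤ n) (hy₀ : y₀ ≤ m) (hy' : y' ≤ y₀)
    (cond : y' = 0 ∨ s y' ≠ x) (pre : ℝ) (hpre : pre ≤ T y')
    (hcount : d ≤ ((((List.range n).map fun t => s (t + 1)).take m).drop y₀).count x) :
    ∃ y, 1 ≤ y ∧ y ≤ m ∧ s y = x ∧ pre + w x d ≤ T y := by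
  set P := (List.range n).map fun t => s (t + 1) with hP
  have hPlen : P.length = n := by simp [hP]
  set L₂ := (P.take m).drop y₀ with hL₂
  have hL₂len : L₂.length = m - y₀ := by
    simp only [hL₂, List.length_drop, List.length_take, hPlen]; omega
  have hxL₂ : x ∈ L₂ := List.count_pos_iff.mp (lt_of_lt_of_le (by omega) hcount)
  obtain ⟨k, hk, hget, hcnt0⟩ := lastOcc x L₂ hxL₂
  have hkm : y₀ + k + 1 ≤ m := by omega
  set y := y₀ + k + 1 with hy
  have hsy : s y = x := by
    have h1 : y₀ + k < (P.take m).length := by simp [hPlen]; omega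
    have h2 : y₀ + k < P.length := by rw [hPlen]; omega
    have e1 : L₂[k] = (P.take m)[y₀ + k]'h1 := List.getElem_drop
    have e2 : (P.take m)[y₀ + k]'h1 = P[y₀ + k]'h2 := List.getElem_take
    rw [e1, e2] at hget
    rw [← hget]; simp [hP]; rfl
  -- the count in segment [y'+1, y]
  have key : d ≤ ((P.drop y').take (y - y')).count x := by
    have e1 : L₂.take (k+1) = (P.drop y₀).take (k+1) := by
      rw [hL₂, List.drop_take, List.take_take, Nat.min_eq_left (by omega)]
    have e2 : d ≤ (L₂.take (k+1)).count x := by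
      have hsplit : L₂.count x = (L₂.take (k+1)).count x + (L₂.drop (k+1)).count x := by
        rw [← List.count_append, List.take_append_drop]
      omega
    have e3 : (P.take y).drop y₀ = (P.drop y₀).take (k+1) := by
      rw [List.drop_take]; congr 1; omega
    have e4 : ((P.take y).drop y₀).Sublist ((P.take y).drop y') := by
      have h5 : (P.take y).drop y₀ = ((P.take y).drop y').drop (y₀ - y') := by
        rw [List.drop_drop]; congr 1; omega
      rw [h5]; exact List.drop_sublist _ _
    have e5 : (P.take y).drop y' = (P.drop y').take (y - y') := List.drop_take
    calc d ≤ (L₂.take (k+1)).count x := e2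
      _ = ((P.take y).drop y₀).count x := by rw [e1, e3]
      _ ≤ ((P.take y).drop y').count x := e4.count_le x
      _ = ((P.drop y').take (y - y')).count x := by rw [e5]
  have hNval : N (y'+1) y = ((P.drop y').take (y - y')).count x := by
    rw [hN (y'+1) y (by omega) (by omega) (by omega)]
    have e : y - (y'+1) + 1 = y - y' := by omega
    simp only [Nat.add_sub_cancel, e, hsy]
  have hN2 : 2 ≤ N (y'+1) y := by omega
  have hWg := hWpos (y'+1) y (by omega) (by omega) (by omega) hN2
  have hwd : w x d ≤ W (y'+1) y := hWg.2 ⟨d, hd, by omega, by rw [hsy]⟩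
  obtain ⟨ℓ, hℓ2, _, hWeq⟩ := hWg.1
  have hWposv : 0 < W (y'+1) y := hWeq ▸ hw (s y) ℓ hℓ2
  have hcond : y' = 0 ∨ s y' ≠ s y := by
    rcases cond with h | h
    · exact Or.inl h
    · exact Or.inr (by rw [hsy]; exact h)
  have hmem : T y' + W (y'+1) y ∈ {r : ℝ | ∃ y'' : ℕ, y'' < y ∧ (y'' = 0 ∨ s y'' ≠ s y) ∧
      0 < W (y'' + 1) y ∧ r = T y'' + W (y'' + 1) y} := ⟨y', by omega, hcond, hWposv, rfl⟩
  have hTg := hTmax y (by omega) (by omega) ⟨_, hmem⟩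
  have hle : T y' + W (y'+1) y ≤ T y := hTg.2 hmem
  exact ⟨y, by omega, hkm, hsy, by linarith⟩

private lemma lemA {α : Type*} [DecidableEq α] (n : ℕ) (s : ℕ → α)
    (w : α → ℕ → ℝ) (hw : ∀ (x : α) (ℓ : ℕ), 2 ≤ ℓ → 0 < w x ℓ)
    (N : ℕ → ℕ → ℕ) (W : ℕ → ℕ → ℝ) (T : ℕ → ℝ)
    (hN : ∀ i j : ℕ, 1 ≤ i → i ≤ j → j ≤ n →
      N i j = (((((List.range n).map fun t => s (t + 1)).drop (i - 1)).take (j - i + 1)).count (s j)))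
    (hWpos : ∀ i j : ℕ, 1 ≤ i → i ≤ j → j ≤ n → 2 ≤ N i j →
      IsGreatest {r : ℝ | ∃ ℓ : ℕ, 2 ≤ ℓ ∧ ℓ ≤ N i j ∧ r = w (s j) ℓ} (W i j))
    (hT0 : T 0 = 0)
    (hTmax : ∀ i : ℕ, 1 ≤ i → i ≤ n →
      {r : ℝ | ∃ y : ℕ, y < i ∧ (y = 0 ∨ s y ≠ s i) ∧ 0 < W (y + 1) i ∧
          r = T y + W (y + 1) i}.Nonempty →
      IsGreatest {r : ℝ | ∃ y : ℕ, y < i ∧ (y = 0 ∨ s y ≠ s i) ∧ 0 < W (y + 1) i ∧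
          r = T y + W (y + 1) i} (T i)) :
    ∀ (bs' : List (α × ℕ)) (x : α) (d : ℕ),
      (∀ p ∈ bs' ++ [(x, d)], 2 ≤ p.2) →
      List.Chain' (fun p q => p.1 ≠ q.1) (bs' ++ [(x, d)]) →
      ∀ m, m ≤ n →
      ((bs' ++ [(x, d)]).map fun p => List.replicate p.2 p.1).flatten.Sublist
        (((List.range n).map fun t => s (t + 1)).take m) →
      ∃ y, 1 ≤ y ∧ y ≤ m ∧ s y = x ∧
        (((bs' ++ [(x, d)]).map fun p => w p.1 p.2).sum) ≤ T y := by
  intro bs'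
  induction bs' using List.reverseRecOn with
  | nil =>
    intro x d h2 _ m hm hsub
    have hd : 2 ≤ d := h2 (x, d) (by simp)
    simp only [List.nil_append, List.map_cons, List.map_nil, List.flatten_cons,
      List.flatten_nil, List.append_nil] at hsub
    have hcount : d ≤ ((((List.range n).map fun t => s (t + 1)).take m).drop 0).count x := by
      rw [List.drop_zero]; exact List.replicate_sublist_iff.mp hsub
    obtain ⟨y, h1, h2', h3, h4⟩ := coreStep n s w hw N W T hN hWpos hTmax x d hd m 0 0 hm
      (Nat.zero_le _) le_rfl (Or.inl rfl) 0 (le_of_eq hT0.symm) hcount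
    refine ⟨y, h1, h2', h3, ?_⟩
    simpa using h4
  | append_singleton M p IH =>
    obtain ⟨x', d'⟩ := p
    intro x d h2 hch m hm hsub
    set P := (List.range n).map fun t => s (t + 1) with hP
    have hPlen : P.length = n := by simp [hP]
    have hsub' : (((M ++ [(x', d')]).map fun p => List.replicate p.2 p.1).flatten
        ++ List.replicate d x).Sublist (P.take m) := by
      simpa using hsub
    obtain ⟨L₁, L₂, hA, hsub1, hsub2⟩ := List.append_sublist_iff.mp hsub'
    set y₀ := L₁.length with hy₀
    have hy₀m : y₀ ≤ m := by
      have := congrArg List.length hA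
      simp only [List.length_append, List.length_take, hPlen] at this
      omega
    have hL₁ : L₁ = P.take y₀ := by
      have h1 : (P.take m).take y₀ = L₁ := by rw [hA]; exact List.take_left
      rw [← h1, List.take_take, Nat.min_eq_left hy₀m]
    have hL₂ : (P.take m).drop y₀ = L₂ := by rw [hA]; exact List.drop_left
    have hchsplit := List.isChain_append.mp hch
    have hch' : List.Chain' (fun p q => p.1 ≠ q.1) (M ++ [(x', d')]) := hchsplit.1
    have hx'x : x' ≠ x := by
      have h3 := hchsplit.2.2
      exact h3 (x', d') (by rw [List.getLast?_concat]; rfl) (x, d) rfl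
    have h2' : ∀ p ∈ M ++ [(x', d')], 2 ≤ p.2 := fun p hp =>
      h2 p (List.mem_append.mpr (Or.inl hp))
    obtain ⟨y', hy'1, hy'y₀, hsy', hwt'⟩ := IH x' d' h2' hch' y₀ (by omega) (hL₁ ▸ hsub1)
    have hd : 2 ≤ d := h2 (x, d) (by simp)
    have hcount : d ≤ ((P.take m).drop y₀).count x := by
      rw [hL₂]; exact List.replicate_sublist_iff.mp hsub2
    obtain ⟨y, hA1, hA2, hA3, hA4⟩ := coreStep n s w hw N W T hN hWpos hTmax x d hd m y₀ y' hm
      hy₀m hy'y₀ (Or.inr (by rw [hsy']; exact hx'x)) _ hwt' hcount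
    refine ⟨y, hA1, hA2, hA3, ?_⟩
    have hsum : (((M ++ [(x', d')]) ++ [(x, d)]).map fun p => w p.1 p.2).sum
        = (((M ++ [(x', d')]).map fun p => w p.1 p.2).sum) + w x d := by
      simp [add_assoc]
    rw [hsum]; exact hA4

private lemma lemB {α : Type*} [DecidableEq α] (n : ℕ) (s : ℕ → α)
    (w : α → ℕ → ℝ) (hw : ∀ (x : α) (ℓ : ℕ), 2 ≤ ℓ → 0 < w x ℓ)
    (N : ℕ → ℕ → ℕ) (W : ℕ → ℕ → ℝ) (T : ℕ → ℝ)
    (hN : ∀ i j : ℕ, 1 ≤ i → i ≤ j → j ≤ n →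
      N i j = (((((List.range n).map fun t => s (t + 1)).drop (i - 1)).take (j - i + 1)).count (s j)))
    (hWpos : ∀ i j : ℕ, 1 ≤ i → i ≤ j → j ≤ n → 2 ≤ N i j →
      IsGreatest {r : ℝ | ∃ ℓ : ℕ, 2 ≤ ℓ ∧ ℓ ≤ N i j ∧ r = w (s j) ℓ} (W i j))
    (hWzero : ∀ i j : ℕ, 1 ≤ i → i ≤ j → j ≤ n → N i j < 2 → W i j = 0)
    (hT0 : T 0 = 0)
    (hTmax : ∀ i : ℕ, 1 ≤ i → i ≤ n →
      {r : ℝ | ∃ y : ℕ, y < i ∧ (y = 0 ∨ s y ≠ s i) ∧ 0 < W (y + 1) i ∧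
          r = T y + W (y + 1) i}.Nonempty →
      IsGreatest {r : ℝ | ∃ y : ℕ, y < i ∧ (y = 0 ∨ s y ≠ s i) ∧ 0 < W (y + 1) i ∧
          r = T y + W (y + 1) i} (T i))
    (hTzero : ∀ i : ℕ, 1 ≤ i → i ≤ n →
      ¬ {r : ℝ | ∃ y : ℕ, y < i ∧ (y = 0 ∨ s y ≠ s i) ∧ 0 < W (y + 1) i ∧
          r = T y + W (y + 1) i}.Nonempty →
      T i = 0) :
    ∀ i, i ≤ n → 0 ≤ T i ∧ (T i = 0 ∨ ∃ (bs' : List (α × ℕ)) (x : α) (d : ℕ),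
      (∀ p ∈ bs' ++ [(x, d)], 2 ≤ p.2) ∧
      List.Chain' (fun p q => p.1 ≠ q.1) (bs' ++ [(x, d)]) ∧
      ((bs' ++ [(x, d)]).map fun p => List.replicate p.2 p.1).flatten.Sublist
        ((((List.range n).map fun t => s (t + 1))).take i) ∧
      x = s i ∧ (((bs' ++ [(x, d)]).map fun p => w p.1 p.2).sum) = T i) := by
  intro i
  induction i using Nat.strong_induction_on with
  | _ i IH =>
  intro hin
  set P := (List.range n).map fun t => s (t + 1) with hP
  rcases Nat.eq_zero_or_pos i with rfl | hi1
  · exact ⟨le_of_eq hT0.symm, Or.inl hT0⟩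
  by_cases hne : ({r : ℝ | ∃ y : ℕ, y < i ∧ (y = 0 ∨ s y ≠ s i) ∧ 0 < W (y + 1) i ∧
      r = T y + W (y + 1) i}).Nonempty
  · have hTg := hTmax i hi1 hin hne
    obtain ⟨y, hyi, cond, hWp, hTi⟩ := hTg.1
    have hN2 : 2 ≤ N (y + 1) i := by
      by_contra h
      push_neg at h
      rw [hWzero (y + 1) i (by omega) (by omega) hin (by omega)] at hWp
      exact lt_irrefl 0 hWp
    have hWg := hWpos (y + 1) i (by omega) (by omega) hin hN2
    obtain ⟨ℓ, hℓ2, hℓN, hWeq⟩ := hWg.1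
    have hrep : (List.replicate ℓ (s i)).Sublist ((P.take i).drop y) := by
      apply List.replicate_sublist_iff.mpr
      have hNv := hN (y + 1) i (by omega) (by omega) hin
      rw [List.drop_take]
      have e : i - (y + 1) + 1 = i - y := by omega
      simp only [Nat.add_sub_cancel, e] at hNv
      omega
    obtain ⟨hTy0, hcase⟩ := IH y hyi (by omega)
    have hTige : 0 ≤ T i := by
      rw [hTi]; linarith
    have single : T y = 0 → ∃ (bs' : List (α × ℕ)) (x : α) (d : ℕ),
        (∀ p ∈ bs' ++ [(x, d)], 2 ≤ p.2) ∧
        List.Chain' (fun p q => p.1 ≠ q.1) (bs' ++ [(x, d)]) ∧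
        ((bs' ++ [(x, d)]).map fun p => List.replicate p.2 p.1).flatten.Sublist (P.take i) ∧
        x = s i ∧ (((bs' ++ [(x, d)]).map fun p => w p.1 p.2).sum) = T i := by
      intro hTy
      refine ⟨[], s i, ℓ, ?_, ?_, ?_, rfl, ?_⟩
      · intro p hp; simp at hp; subst hp; exact hℓ2
      · exact List.isChain_singleton _
      · simpa using hrep.trans (List.drop_sublist _ _)
      · simp only [List.nil_append, List.map_cons, List.map_nil, List.sum_cons,
          List.sum_nil, add_zero]
        rw [← hWeq, hTi, hTy, zero_add]
    refine ⟨hTige, Or.inr ?_⟩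
    rcases cond with rfl | hsne
    · exact single hT0
    rcases hcase with hTy | ⟨bs'', x', d', h2', hch', hsub', hx', hwt'⟩
    · exact single hTy
    · refine ⟨bs'' ++ [(x', d')], s i, ℓ, ?_, ?_, ?_, rfl, ?_⟩
      · intro p hp
        rw [List.mem_append] at hp
        rcases hp with hp | hp
        · exact h2' p hp
        · simp at hp; subst hp; exact hℓ2
      · apply List.isChain_append.mpr
        refine ⟨hch', List.isChain_singleton _, ?_⟩
        intro a ha b hb
        rw [List.getLast?_concat] at ha
        simp at ha hb
        subst ha; subst hb
        simp only []
        rw [hx']; exact hsne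
      · have e1 : (((bs'' ++ [(x', d')]) ++ [(s i, ℓ)]).map
            fun p => List.replicate p.2 p.1).flatten
            = ((bs'' ++ [(x', d')]).map fun p => List.replicate p.2 p.1).flatten
              ++ List.replicate ℓ (s i) := by simp
        have e2 : P.take i = P.take y ++ (P.take i).drop y := by
          conv_lhs => rw [← List.take_append_drop y (P.take i)]
          rw [List.take_take, Nat.min_eq_left (by omega)]
        rw [e1, e2]
        exact List.Sublist.append hsub' hrep
      · have e3 : (((bs'' ++ [(x', d')]) ++ [(s i, ℓ)]).map fun p => w p.1 p.2).sum
            = ((bs'' ++ [(x', d')]).map fun p => w p.1 p.2).sum + w (s i) ℓ := by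
          simp [add_assoc]
        rw [e3, hwt', ← hWeq, hTi]
  · have hz := hTzero i hi1 hin hne
    exact ⟨le_of_eq hz.symm, Or.inl hz⟩

/-- Correctness of the `O(n²)` DP for Weighted-LDS. The string is `S[1..n]` with
`S[i] = s i`, and `w x ℓ > 0` is an arbitrary positive weight for each letter `x` and
`ℓ ≥ 2`. `N i j` is the number of occurrences of `S[j]` in `S[i..j]`; `W i j` is
`max { w (S[j]) ℓ : 2 ≤ ℓ ≤ N i j }` if `N i j ≥ 2` and `0` otherwise; `T 0 = 0` and
`T i` is the maximum of `T y + W (y+1) i` over all `y < i` with (`y = 0` or `S[y] ≠ S[i]`)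
and `W (y+1) i > 0` (and `T i = 0` if no such `y` exists). Then `max_{0 ≤ i ≤ n} T i`
equals the maximum total weight `∑ᵢ w xᵢ dᵢ` of an LD-subsequence
`x₁^{d₁} ⋯ x_k^{d_k}` of `S` (and `0` if `S` has no LD-subsequence). -/
theorem stmt_14 {α : Type*} [DecidableEq α] (n : ℕ) (s : ℕ → α)
    (w : α → ℕ → ℝ) (hw : ∀ (x : α) (ℓ : ℕ), 2 ≤ ℓ → 0 < w x ℓ)
    (N : ℕ → ℕ → ℕ) (W : ℕ → ℕ → ℝ) (T : ℕ → ℝ)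
    (hN : ∀ i j : ℕ, 1 ≤ i → i ≤ j → j ≤ n →
      N i j = (((((List.range n).map fun t => s (t + 1)).drop (i - 1)).take (j - i + 1)).count (s j)))
    (hWpos : ∀ i j : ℕ, 1 ≤ i → i ≤ j → j ≤ n → 2 ≤ N i j →
      IsGreatest {r : ℝ | ∃ ℓ : ℕ, 2 ≤ ℓ ∧ ℓ ≤ N i j ∧ r = w (s j) ℓ} (W i j))
    (hWzero : ∀ i j : ℕ, 1 ≤ i → i ≤ j → j ≤ n → N i j < 2 → W i j = 0)
    (hT0 : T 0 = 0)
    (hTmax : ∀ i : ℕ, 1 ≤ i → i ≤ n →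
      {r : ℝ | ∃ y : ℕ, y < i ∧ (y = 0 ∨ s y ≠ s i) ∧ 0 < W (y + 1) i ∧
          r = T y + W (y + 1) i}.Nonempty →
      IsGreatest {r : ℝ | ∃ y : ℕ, y < i ∧ (y = 0 ∨ s y ≠ s i) ∧ 0 < W (y + 1) i ∧
          r = T y + W (y + 1) i} (T i))
    (hTzero : ∀ i : ℕ, 1 ≤ i → i ≤ n →
      ¬ {r : ℝ | ∃ y : ℕ, y < i ∧ (y = 0 ∨ s y ≠ s i) ∧ 0 < W (y + 1) i ∧
          r = T y + W (y + 1) i}.Nonempty →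
      T i = 0) :
    ∃ Mx : ℝ,
      IsGreatest {r : ℝ | ∃ i : ℕ, i ≤ n ∧ r = T i} Mx ∧
      IsGreatest
        ({0} ∪ {r : ℝ | ∃ (l : List α) (bs : List (α × ℕ)),
          l.Sublist ((List.range n).map fun t => s (t + 1)) ∧ IsBlockDecomp bs l ∧
          r = (bs.map fun p => w p.1 p.2).sum})
        Mx := by
  classical
  set P := (List.range n).map fun t => s (t + 1) with hP
  have hPlen : P.length = n := by simp [hP]
  set F : Finset ℝ := (Finset.range (n + 1)).image T with hF
  have hFne : F.Nonempty := ⟨T 0, Finset.mem_image.mpr ⟨0, Finset.mem_range.mpr (by omega), rfl⟩⟩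
  set Mx := F.max' hFne with hMx
  have hmemF : ∀ i, i ≤ n → T i ≤ Mx := fun i hi =>
    F.le_max' _ (Finset.mem_image.mpr ⟨i, Finset.mem_range.mpr (by omega), rfl⟩)
  obtain ⟨i₀, hi₀r, hi₀⟩ := Finset.mem_image.mp (F.max'_mem hFne)
  have hi₀n : i₀ ≤ n := by have := Finset.mem_range.mp hi₀r; omega
  refine ⟨Mx, ⟨⟨i₀, hi₀n, hi₀.symm⟩, ?_⟩, ?_, ?_⟩
  · intro r hr
    obtain ⟨i, hi, rfl⟩ := hr
    exact hmemF i hi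
  · -- membership in {0} ∪ weights
    obtain ⟨hTge, hcase⟩ := lemB n s w hw N W T hN hWpos hWzero hT0 hTmax hTzero i₀ hi₀n
    rcases hcase with hz | ⟨bs', x, d, h2, hch, hsub, hx, hwt⟩
    · left
      simp only [Set.mem_singleton_iff]
      rw [hMx, ← hi₀]; exact hz
    · right
      refine ⟨((bs' ++ [(x, d)]).map fun p => List.replicate p.2 p.1).flatten,
        bs' ++ [(x, d)], ?_, ⟨by simp, h2, hch, rfl⟩, ?_⟩
      · exact hsub.trans (List.take_sublist _ _)
      · rw [hwt, hi₀]
  · -- upper bound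
    intro r hr
    rcases hr with hr | ⟨l, bs, hsub, ⟨hbne, h2, hch, hflat⟩, rfl⟩
    · have : r = 0 := hr
      rw [this, ← hT0]
      exact hmemF 0 (by omega)
    · obtain rfl | ⟨bs', p, rfl⟩ := bs.eq_nil_or_concat
      · exact absurd rfl hbne
      obtain ⟨x, d⟩ := p
      simp only [List.concat_eq_append] at h2 hch hflat ⊢
      have hsub' : ((bs' ++ [(x, d)]).map fun p => List.replicate p.2 p.1).flatten.Sublist
          (P.take n) := by
        rw [← hflat, ← hPlen, List.take_length]
        exact hsub
      obtain ⟨y, hy1, hyn, _, hle⟩ := lemA n s w hw N W T hN hWpos hT0 hTmax bs' x d h2 hch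
        n le_rfl hsub'
      exact hle.trans (hmemF y hyn)
end
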